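/- Soundness of the nonrequisite observation criterion: in a single-decision SCIM, if observation X ∈ Pa_D is d-separated from the downstream utility nodes 𝒰^D = 𝒰 ∩ Desc(D) given (Pa_D ∪ {D}) \ {X}, then removing the information link X → D does not decrease the maximum attainable expected utility. -/

import Mathlib

attribute [local instance] Classical.propDecidable

noncomputable section

/-- Acyclicity of a directed graph. -/
def Acyclic {V : Type} (E : V → V → Prop) : Prop := ∀ v, ¬ Relation.TransGen E v v

/-- A walk in the digraph: a nonempty list of vertices where consecutive
vertices are joined by an edge in some direction. -/
def IsWalk {V : Type} (E : V → V → Prop) (p : List V) : Prop :=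
  p ≠ [] ∧ p.Chain' (fun a b => E a b ∨ E b a)

/-- A consecutive triple `a, b, c` blocks a path w.r.t. `S` if `b` is a collider
with no descendant (including itself) in `S`, or a non-collider in `S`. -/
def BlockedTriple {V : Type} (E : V → V → Prop) (S : Set V) (a b c : V) : Prop :=
  (E a b ∧ E c b ∧ ∀ w, Relation.ReflTransGen E b w → w ∉ S) ∨
  (¬ (E a b ∧ E c b) ∧ b ∈ S)

/-- A path is d-separated (blocked) by `S`. -/
def BlocksPath {V : Type} (E : V → V → Prop) (S : Set V) (p : List V) : Prop :=
  (∃ x, p.head? = some x ∧ x ∈ S) ∨ (∃ x, p.getLast? = some x ∧ x ∈ S) ∨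
  (∃ l a b c r, p = l ++ a :: b :: c :: r ∧ BlockedTriple E S a b c)

/-- `A` is d-separated from `B` given `S`. -/
def DSep {V : Type} (E : V → V → Prop) (A B S : Set V) : Prop :=
  ∀ p : List V, IsWalk E p → (∃ a ∈ A, p.head? = some a) →
    (∃ b ∈ B, p.getLast? = some b) → BlocksPath E S p

/-- An observation `X ∈ Pa_D` is requisite in the graph `E` with decision `D` and
utility nodes `U` if it is d-connected to the downstream utilities `U ∩ Desc(D)`
given the other observations and the decision, `(Pa_D ∪ {D}) \ {X}`. -/
def RequisiteG {V : Type} (E : V → V → Prop) (D : V) (U : Set V) (X : V) : Prop :=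
  E X D ∧ ¬ DSep E {X} {u | u ∈ U ∧ Relation.ReflTransGen E D u}
      {v | (E v D ∧ v ≠ X) ∨ v = D}

/-- The edge relation of the minimal reduction: all information links from
nonrequisite observations are removed. -/
def ReducedEdge {V : Type} (E : V → V → Prop) (D : V) (U : Set V) : V → V → Prop :=
  fun a b => E a b ∧ (b = D → RequisiteG E D U a)

variable {V : Type} [Fintype V] [DecidableEq V]

/-- A single-decision structural causal influence model (SCIM): a causal
influence diagram (DAG with a decision node `D` and childless utility nodes
`Util` whose values are interpreted in `ℝ` via `utilReal`), finite nonempty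
domains, structural functions for all non-decision nodes depending only on
parents, and mutually independent finitely-supported exogenous variables. -/
structure SCIM (V : Type) [Fintype V] [DecidableEq V] where
  Edge : V → V → Prop
  acyclic : Acyclic Edge
  D : V
  Util : Finset V
  utilNotD : D ∉ Util
  utilNoChild : ∀ u ∈ Util, ∀ v, ¬ Edge u v
  Dom : V → Type
  domFin : ∀ v, Fintype (Dom v)
  domNE : ∀ v, Nonempty (Dom v)
  utilReal : (u : V) → Dom u → ℝ
  ExoDom : V → Type
  exoFin : ∀ v, Fintype (ExoDom v)
  exoNE : ∀ v, Nonempty (ExoDom v)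
  f : (v : V) → ((p : V) → Dom p) → ExoDom v → Dom v
  localDep : ∀ v a a' e, (∀ p, Edge p v → a p = a' p) → f v a e = f v a' e
  P : (v : V) → ExoDom v → ℝ
  Pnonneg : ∀ v e, 0 ≤ P v e
  Psum : ∀ v, ∑ e ∈ (exoFin v).elems, P v e = 1

namespace SCIM

variable (M : SCIM V)

/-- Joint (product) probability of an exogenous setting. -/
def Pjoint (ε : ∀ v, M.ExoDom v) : ℝ := ∏ v, M.P v (ε v)

/-- All exogenous settings. -/
def exoElems : Finset (∀ v, M.ExoDom v) :=
  letI := M.exoFin; Finset.univ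

/-- A default assignment of values. -/
def dflt : ∀ v, M.Dom v := fun v => (M.domNE v).some

/-- `a` solves the system of structural equations `g` at exogenous setting `ε`. -/
def Solves (g : (v : V) → ((p : V) → M.Dom p) → M.ExoDom v → M.Dom v)
    (ε : ∀ v, M.ExoDom v) (a : ∀ v, M.Dom v) : Prop :=
  ∀ v, a v = g v a (ε v)

/-- The (unique, by acyclicity) solution of the structural equations `g`
at `ε`: the values of all endogenous variables obtained by recursive
application of the structural functions. -/
def sol (g : (v : V) → ((p : V) → M.Dom p) → M.ExoDom v → M.Dom v)
    (ε : ∀ v, M.ExoDom v) : ∀ v, M.Dom v :=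
  if h : ∃ a, M.Solves g ε a then h.choose else M.dflt

/-- Replace the structural function at node `X` by `gX` (a soft intervention). -/
def replaceAt (g : (v : V) → ((p : V) → M.Dom p) → M.ExoDom v → M.Dom v) (X : V)
    (gX : ((p : V) → M.Dom p) → M.ExoDom X → M.Dom X) :
    (v : V) → ((p : V) → M.Dom p) → M.ExoDom v → M.Dom v :=
  fun v => if h : v = X then (by subst h; exact gX) else g v

/-- Hard intervention do(`X` = `x`): constant functions on `X`. -/
def doSet (g : (v : V) → ((p : V) → M.Dom p) → M.ExoDom v → M.Dom v)
    (X : Set V) (x : ∀ v, M.Dom v) :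
    (v : V) → ((p : V) → M.Dom p) → M.ExoDom v → M.Dom v :=
  fun v => if v ∈ X then fun _ _ => x v else g v

/-- A policy: a structural function for `D` that depends only on the
observations `Pa_D` (and the exogenous variable of `D`). -/
def IsPolicy (π : ((p : V) → M.Dom p) → M.ExoDom M.D → M.Dom M.D) : Prop :=
  ∀ a a' e, (∀ p, M.Edge p M.D → a p = a' p) → π a e = π a' e

/-- The policy-completed system of structural functions. -/
def gpol (π : ((p : V) → M.Dom p) → M.ExoDom M.D → M.Dom M.D) :
    (v : V) → ((p : V) → M.Dom p) → M.ExoDom v → M.Dom v :=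
  M.replaceAt M.f M.D π

/-- Total utility of an assignment: the sum of the utility-node values. -/
def TotalU (a : ∀ v, M.Dom v) : ℝ := ∑ u ∈ M.Util, M.utilReal u (a u)

/-- Expected total utility of a system of structural equations `g`. -/
def EUg (g : (v : V) → ((p : V) → M.Dom p) → M.ExoDom v → M.Dom v) : ℝ :=
  ∑ ε ∈ M.exoElems, M.Pjoint ε * M.TotalU (M.sol g ε)

/-- Expected total utility of a policy. -/
def EU (π : ((p : V) → M.Dom p) → M.ExoDom M.D → M.Dom M.D) : ℝ :=
  M.EUg (M.gpol π)

/-- An optimal policy maximizes expected total utility. -/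
def IsOptimal (π : ((p : V) → M.Dom p) → M.ExoDom M.D → M.Dom M.D) : Prop :=
  M.IsPolicy π ∧ ∀ π', M.IsPolicy π' → M.EU π' ≤ M.EU π

/-- Probability of an event over exogenous settings. -/
def PrEv (Ev : (∀ v, M.ExoDom v) → Prop) : ℝ :=
  ∑ ε ∈ M.exoElems, if Ev ε then M.Pjoint ε else 0

/-- Conditional expectation of `h` given the event `Ev`. -/
def condExp (h : (∀ v, M.ExoDom v) → ℝ) (Ev : (∀ v, M.ExoDom v) → Prop) : ℝ :=
  (∑ ε ∈ M.exoElems, if Ev ε then M.Pjoint ε * h ε else 0) / M.PrEv Ev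

/-- Conditional probability of `h` given `Ev`. -/
def condProb (h Ev : (∀ v, M.ExoDom v) → Prop) : ℝ :=
  M.PrEv (fun ε => h ε ∧ Ev ε) / M.PrEv Ev

/-- The event that the decision context (the observations `Pa_D`) takes the
values `pa`, under policy `π`. -/
def CtxEvent (π : ((p : V) → M.Dom p) → M.ExoDom M.D → M.Dom M.D)
    (pa : ∀ v, M.Dom v) (ε : ∀ v, M.ExoDom v) : Prop :=
  ∀ p, M.Edge p M.D → M.sol (M.gpol π) ε p = pa p

/-- The potential response under the hard intervention do(`X` = `x`),
in the policy-completed model: an assignment to all variables. -/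
def response (π : ((p : V) → M.Dom p) → M.ExoDom M.D → M.Dom M.D)
    (X : V) (x : M.Dom X) (ε : ∀ v, M.ExoDom v) : ∀ v, M.Dom v :=
  M.sol (M.doSet (M.gpol π) {X} (Function.update M.dflt X x)) ε

/-- The nested-counterfactual assignment realizing `U_{X_d}`: intervene on `X`
with the value `X_d(ε)` it would take under do(`D` = `d`). -/
def nestedSol (π : ((p : V) → M.Dom p) → M.ExoDom M.D → M.Dom M.D)
    (X : V) (d : M.Dom M.D) (ε : ∀ v, M.ExoDom v) : ∀ v, M.Dom v :=
  M.response π X (M.response π M.D d ε X) ε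

/-- Instrumental control incentive on `X`: in some decision context `pa`
(of positive probability), every optimal policy has
`E[U_{X_d} | pa] ≠ E[U | pa]` for some `d`. -/
def HasICI (X : V) : Prop :=
  ∃ pa : ∀ v, M.Dom v, ∀ π, M.IsOptimal π →
    0 < M.PrEv (M.CtxEvent π pa) ∧
    ∃ d : M.Dom M.D,
      M.condExp (fun ε => M.TotalU (M.nestedSol π X d ε)) (M.CtxEvent π pa) ≠
      M.condExp (fun ε => M.TotalU (M.sol (M.gpol π) ε)) (M.CtxEvent π pa)

/-- A policy that does not use the information link `X → D`. -/
def IsPolicyWithout (X : V)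
    (π : ((p : V) → M.Dom p) → M.ExoDom M.D → M.Dom M.D) : Prop :=
  M.IsPolicy π ∧ ∀ a a' e, (∀ p, M.Edge p M.D → p ≠ X → a p = a' p) → π a e = π a' e

/-- Counterfactual fairness of policy `π` w.r.t. sensitive attribute `A`:
`Pr(D_{a'} = d | pa_D, a) = Pr(D = d | pa_D, a)` for all `d`, contexts `pa_D`,
and attribute values `a, a'` with positive probability of the conditioning event. -/
def CFair (π : ((p : V) → M.Dom p) → M.ExoDom M.D → M.Dom M.D) (A : V) : Prop :=
  ∀ (d : M.Dom M.D) (pa : ∀ v, M.Dom v) (a a' : M.Dom A),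
    0 < M.PrEv (fun ε => M.CtxEvent π pa ε ∧ M.sol (M.gpol π) ε A = a) →
    M.condProb (fun ε => M.response π A a' ε M.D = d)
        (fun ε => M.CtxEvent π pa ε ∧ M.sol (M.gpol π) ε A = a) =
    M.condProb (fun ε => M.sol (M.gpol π) ε M.D = d)
        (fun ε => M.CtxEvent π pa ε ∧ M.sol (M.gpol π) ε A = a)

end SCIM
attribute [local instance] Classical.propDecidable
attribute [local instance] SCIM.domFin SCIM.exoFin SCIM.domNE SCIM.exoNE

namespace NRAux

open Finset

variable {V : Type} [Fintype V] [DecidableEq V]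

/-! ### Generic finite-product sum helpers -/

section PiHelpers

variable (B : V → Type) [∀ v, Fintype (B v)]

lemma sum_update_eq_card_mul (v₀ : V) (F : (∀ v, B v) → ℝ) :
    ∑ z : ∀ v, B v, ∑ c : B v₀, F (Function.update z v₀ c)
      = (Fintype.card (B v₀) : ℝ) * ∑ z : ∀ v, B v, F z := by
  have hinv : Function.Involutive
      (fun p : (∀ v, B v) × B v₀ => (Function.update p.1 v₀ p.2, p.1 v₀)) := by
    intro p
    simp [Function.update_idem, Function.update_self, Function.update_eq_self]
  calc ∑ z : ∀ v, B v, ∑ c : B v₀, F (Function.update z v₀ c)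
      = ∑ p : (∀ v, B v) × B v₀, F (Function.update p.1 v₀ p.2) := by
        rw [Fintype.sum_prod_type]
    _ = ∑ p : (∀ v, B v) × B v₀, F p.1 := by
        rw [← Equiv.sum_comp hinv.toPerm (fun p : (∀ v, B v) × B v₀ => F p.1)]
        rfl
    _ = (Fintype.card (B v₀) : ℝ) * ∑ z : ∀ v, B v, F z := by
        rw [Fintype.sum_prod_type]
        simp [Finset.sum_const, mul_comm, Finset.mul_sum]

/-- summing out one coordinate whose kernel sums to one. -/
lemma sum_out (v₀ : V) (k G : (∀ v, B v) → ℝ)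
    (hG : ∀ z c, G (Function.update z v₀ c) = G z)
    (hk : ∀ z, ∑ c : B v₀, k (Function.update z v₀ c) = 1) :
    (Fintype.card (B v₀) : ℝ) * ∑ z : ∀ v, B v, k z * G z = ∑ z : ∀ v, B v, G z := by
  rw [← sum_update_eq_card_mul B v₀ (fun z => k z * G z)]
  have : ∀ z : ∀ v, B v, ∑ c : B v₀,
      k (Function.update z v₀ c) * G (Function.update z v₀ c) = G z := by
    intro z
    calc ∑ c : B v₀, k (Function.update z v₀ c) * G (Function.update z v₀ c)
        = ∑ c : B v₀, k (Function.update z v₀ c) * G z := by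
          refine Finset.sum_congr rfl fun c _ => by rw [hG]
      _ = (∑ c : B v₀, k (Function.update z v₀ c)) * G z := by rw [Finset.sum_mul]
      _ = G z := by rw [hk]; ring
  rw [Finset.sum_congr rfl fun z _ => this z]

lemma count_classes (T : Finset V) (w : ∀ v, B v) :
    (∑ y : ∀ v, B v, if (∀ v ∈ T, w v = y v) then (1:ℝ) else 0)
      * ∏ v ∈ T, (Fintype.card (B v) : ℝ)
      = ∏ v : V, (Fintype.card (B v) : ℝ) := by
  classical
  induction T using Finset.induction with
  | empty =>
      simp [Finset.sum_const, Finset.card_univ, Fintype.card_pi]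
  | @insert a T ha ih =>
      have key : (Fintype.card (B a) : ℝ) *
          (∑ y : ∀ v, B v, if (∀ v ∈ insert a T, w v = y v) then (1:ℝ) else 0)
          = ∑ y : ∀ v, B v, if (∀ v ∈ T, w v = y v) then (1:ℝ) else 0 := by
        rw [← sum_update_eq_card_mul B a
          (fun y => if (∀ v ∈ insert a T, w v = y v) then (1:ℝ) else 0)]
        refine Finset.sum_congr rfl fun y _ => ?_
        have : ∀ c : B a, (∀ v ∈ insert a T, w v = Function.update y a c v)
            ↔ (c = w a ∧ ∀ v ∈ T, w v = y v) := by
          intro c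
          constructor
          · intro h
            refine ⟨?_, fun v hv => ?_⟩
            · have := h a (Finset.mem_insert_self a T)
              simpa using this.symm
            · have := h v (Finset.mem_insert_of_mem hv)
              rwa [Function.update_of_ne (fun hva => ha (by rw [← hva]; exact hv))] at this
          · rintro ⟨hc, h⟩ v hv
            rcases Finset.mem_insert.1 hv with rfl | hv
            · simp [hc]
            · rw [Function.update_of_ne (fun hva => ha (by rw [← hva]; exact hv))]
              exact h v hv
        calc ∑ c : B a, (if (∀ v ∈ insert a T, w v = Function.update y a c v) then (1:ℝ) else 0)
            = ∑ c : B a, (if (c = w a ∧ ∀ v ∈ T, w v = y v) then (1:ℝ) else 0) := by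
              refine Finset.sum_congr rfl fun c _ => by rw [if_congr (this c) rfl rfl]
          _ = if (∀ v ∈ T, w v = y v) then (1:ℝ) else 0 := by
              by_cases h : ∀ v ∈ T, w v = y v
              · have hc : ∀ c : B a, ((c = w a ∧ ∀ v ∈ T, w v = y v) ↔ c = w a) :=
                  fun c => and_iff_left h
                rw [Finset.sum_congr rfl fun c _ => if_congr (hc c) rfl rfl,
                  Finset.sum_ite_eq' Finset.univ (w a) (fun _ => (1:ℝ))]
                simp only [Finset.mem_univ, if_true, h]
                rw [if_pos h]
              · simp [h]
      rw [Finset.prod_insert ha,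
        show (∑ y : ∀ v, B v, if (∀ v ∈ insert a T, w v = y v) then (1:ℝ) else 0) *
            ((Fintype.card (B a) : ℝ) * ∏ v ∈ T, (Fintype.card (B v) : ℝ))
          = ((Fintype.card (B a) : ℝ) *
              ∑ y : ∀ v, B v, if (∀ v ∈ insert a T, w v = y v) then (1:ℝ) else 0) *
            ∏ v ∈ T, (Fintype.card (B v) : ℝ) from by ring,
        key, ih]

end PiHelpers


/-! ### Part A: solution theory -/

section SolTheory

variable (M : SCIM V)

def Adapted (g : (v : V) → ((p : V) → M.Dom p) → M.ExoDom v → M.Dom v) : Prop :=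
  ∀ v a a' e, (∀ p, M.Edge p v → a p = a' p) → g v a e = g v a' e

lemma wf_lt : WellFounded (Relation.TransGen M.Edge) := by
  haveI : IsTrans V (Relation.TransGen M.Edge) := ⟨fun _ _ _ => Relation.TransGen.trans⟩
  haveI : IsIrrefl V (Relation.TransGen M.Edge) := ⟨fun v h => M.acyclic v h⟩
  exact Finite.wellFounded_of_trans_of_irrefl _

lemma wf_gt : WellFounded (Function.swap (Relation.TransGen M.Edge)) := by
  haveI : IsTrans V (Function.swap (Relation.TransGen M.Edge)) :=
    ⟨fun _ _ _ h h' => Relation.TransGen.trans h' h⟩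
  haveI : IsIrrefl V (Function.swap (Relation.TransGen M.Edge)) := ⟨fun v h => M.acyclic v h⟩
  exact Finite.wellFounded_of_trans_of_irrefl _

lemma no_self_edge (v : V) : ¬ M.Edge v v := fun h => M.acyclic v (Relation.TransGen.single h)

lemma edge_ne {a b : V} (h : M.Edge a b) : a ≠ b := by
  rintro rfl; exact no_self_edge M a h

lemma exists_solves {g} (hg : Adapted M g) (ε : ∀ v, M.ExoDom v) : ∃ a, M.Solves g ε a := by
  let F : (v : V) → ((p : V) → Relation.TransGen M.Edge p v → M.Dom p) → M.Dom v :=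
    fun v rec =>
      g v (fun p => if h : Relation.TransGen M.Edge p v then rec p h else M.dflt p) (ε v)
  let a : ∀ v, M.Dom v := fun v => (wf_lt M).fix F v
  refine ⟨a, fun v => ?_⟩
  have ha : a v = F v (fun p _ => a p) := WellFounded.fix_eq (wf_lt M) F v
  rw [ha]
  exact hg v _ _ _ (fun p hp => by rw [dif_pos (Relation.TransGen.single hp)])

lemma solves_unique {g} (hg : Adapted M g) {ε a b}
    (ha : M.Solves g ε a) (hb : M.Solves g ε b) : a = b := by
  funext v
  induction v using (wf_lt M).induction with
  | _ v ih =>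
    rw [ha v, hb v]
    exact hg v a b (ε v) (fun p hp => ih p (Relation.TransGen.single hp))

lemma sol_solves {g} (hg : Adapted M g) (ε) : M.Solves g ε (M.sol g ε) := by
  have h : ∃ a, M.Solves g ε a := exists_solves M hg ε
  unfold SCIM.sol
  rw [dif_pos h]
  exact h.choose_spec

lemma sol_eq {g} (hg : Adapted M g) {ε a} (ha : M.Solves g ε a) : M.sol g ε = a :=
  solves_unique M hg (sol_solves M hg ε) ha

lemma replaceAt_same' (g : (v : V) → ((p : V) → M.Dom p) → M.ExoDom v → M.Dom v) (X : V)
    (gX : ((p : V) → M.Dom p) → M.ExoDom X → M.Dom X) : M.replaceAt g X gX X = gX := by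
  simp [SCIM.replaceAt]

lemma replaceAt_ne' (g : (v : V) → ((p : V) → M.Dom p) → M.ExoDom v → M.Dom v) (X : V)
    (gX : ((p : V) → M.Dom p) → M.ExoDom X → M.Dom X) {v : V} (h : v ≠ X) :
    M.replaceAt g X gX v = g v := dif_neg h

def gd (d : M.Dom M.D) : (v : V) → ((p : V) → M.Dom p) → M.ExoDom v → M.Dom v :=
  fun v => if h : v = M.D then (by rw [h]; exact fun _ _ => d) else M.f v

lemma gd_D (d : M.Dom M.D) : gd M d M.D = fun _ _ => d := by simp [gd]

lemma gd_ne (d : M.Dom M.D) {v} (h : v ≠ M.D) : gd M d v = M.f v := dif_neg h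

lemma gd_adapted (d : M.Dom M.D) : Adapted M (gd M d) := by
  intro v a a' e hp
  by_cases h : v = M.D
  · subst h; rw [gd_D]
  · rw [gd_ne M d h]; exact M.localDep v a a' e hp

lemma gpol_ne {π} {v : V} (h : v ≠ M.D) : M.gpol π v = M.f v := dif_neg h

lemma gpol_adapted {π} (hπ : M.IsPolicy π) : Adapted M (M.gpol π) := by
  intro v a a' e hp
  by_cases h : v = M.D
  · subst h
    rw [SCIM.gpol, replaceAt_same' M]
    exact hπ a a' e hp
  · rw [gpol_ne M h]; exact M.localDep v a a' e hp

lemma sol_agree_nonDesc {g g'} (hg : Adapted M g) (hg' : Adapted M g')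
    (hagree : ∀ v, v ≠ M.D → g v = g' v) (ε) :
    ∀ v, ¬ Relation.ReflTransGen M.Edge M.D v → M.sol g ε v = M.sol g' ε v := by
  intro v
  induction v using (wf_lt M).induction with
  | _ v ih =>
    intro hv
    have hvD : v ≠ M.D := fun h => hv (h ▸ Relation.ReflTransGen.refl)
    rw [sol_solves M hg ε v, sol_solves M hg' ε v, ← hagree v hvD]
    exact hg v _ _ _ (fun p hp => ih p (Relation.TransGen.single hp)
      (fun hDp => hv (hDp.tail hp)))

lemma sol_gd_update_exoD (d : M.Dom M.D) (ε) (c : M.ExoDom M.D) :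
    M.sol (gd M d) (Function.update ε M.D c) = M.sol (gd M d) ε := by
  apply sol_eq M (gd_adapted M d)
  intro v
  by_cases h : v = M.D
  · subst h
    have h2 := sol_solves M (gd_adapted M d) ε M.D
    simp only [gd_D] at h2 ⊢
    exact h2
  · rw [gd_ne M d h, Function.update_of_ne h]
    have := sol_solves M (gd_adapted M d) ε v
    rwa [gd_ne M d h] at this

lemma sol_gpol_eq_gd {π} (hπ : M.IsPolicy π) (ε) :
    M.sol (M.gpol π) ε = M.sol (gd M (M.sol (M.gpol π) ε M.D)) ε := by
  symm
  apply sol_eq M (gd_adapted M _)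
  intro v
  by_cases h : v = M.D
  · subst h; rw [gd_D]
  · rw [gd_ne M _ h]
    have := sol_solves M (gpol_adapted M hπ) ε v
    rwa [gpol_ne M h] at this

lemma sol_gpol_D {π} (hπ : M.IsPolicy π) (ε) :
    M.sol (M.gpol π) ε M.D = π (M.sol (M.gpol π) ε) (ε M.D) := by
  have := sol_solves M (gpol_adapted M hπ) ε M.D
  rwa [SCIM.gpol, replaceAt_same' M] at this

end SolTheory


/-! ### Part B: pushforward to value level -/

section Pushforward

variable (M : SCIM V)

def q (v : V) (z : ∀ p, M.Dom p) : ℝ :=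
  ∑ e : M.ExoDom v, if z v = M.f v z e then M.P v e else 0

def qd (d : M.Dom M.D) (v : V) (z : ∀ p, M.Dom p) : ℝ :=
  if v = M.D then (if z M.D = d then 1 else 0) else q M v z

lemma P_univ_sum (v : V) : ∑ e : M.ExoDom v, M.P v e = 1 := M.Psum v

lemma prod_ite_all (c : V → Prop) (a : V → ℝ) :
    (∏ v : V, if c v then a v else 0) = if (∀ v, c v) then ∏ v : V, a v else 0 := by
  by_cases h : ∀ v, c v
  · rw [if_pos h]; exact Finset.prod_congr rfl fun v _ => if_pos (h v)
  · rw [if_neg h]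
    push_neg at h
    obtain ⟨v, hv⟩ := h
    exact Finset.prod_eq_zero (Finset.mem_univ v) (if_neg hv)

lemma pushforward {g} (hg : Adapted M g) (h : (∀ v, M.Dom v) → ℝ) :
    ∑ ε : ∀ v, M.ExoDom v, M.Pjoint ε * h (M.sol g ε)
      = ∑ z : ∀ v, M.Dom v,
          (∏ v : V, ∑ e : M.ExoDom v, if z v = g v z e then M.P v e else 0) * h z := by
  have key : ∀ z, (∏ v : V, ∑ e : M.ExoDom v, if z v = g v z e then M.P v e else 0)
      = ∑ ε : ∀ v, M.ExoDom v, if M.Solves g ε z then M.Pjoint ε else 0 := by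
    intro z
    rw [Finset.prod_univ_sum (fun v => (Finset.univ : Finset (M.ExoDom v)))
      (fun v e => if z v = g v z e then M.P v e else 0), Fintype.piFinset_univ]
    refine Finset.sum_congr rfl fun ε _ => ?_
    rw [prod_ite_all (fun v => z v = g v z (ε v)) (fun v => M.P v (ε v))]
    congr 1
  have hR : ∑ z : ∀ v, M.Dom v,
        (∏ v : V, ∑ e : M.ExoDom v, if z v = g v z e then M.P v e else 0) * h z
      = ∑ z : ∀ v, M.Dom v,
        (∑ ε : ∀ v, M.ExoDom v, if M.Solves g ε z then M.Pjoint ε else 0) * h z :=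
    Finset.sum_congr rfl fun z _ => by rw [key z]
  rw [hR]
  refine Eq.symm ?_
  calc ∑ z : ∀ v, M.Dom v, (∑ ε : ∀ v, M.ExoDom v, if M.Solves g ε z then M.Pjoint ε else 0) * h z
      = ∑ z : ∀ v, M.Dom v, ∑ ε : ∀ v, M.ExoDom v,
          (if M.Solves g ε z then M.Pjoint ε * h z else 0) := by
        refine Finset.sum_congr rfl fun z _ => ?_
        rw [Finset.sum_mul]
        exact Finset.sum_congr rfl fun ε _ => by rw [ite_mul, zero_mul]
    _ = ∑ ε : ∀ v, M.ExoDom v, ∑ z : ∀ v, M.Dom v,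
          (if M.Solves g ε z then M.Pjoint ε * h z else 0) := Finset.sum_comm
    _ = ∑ ε : ∀ v, M.ExoDom v, M.Pjoint ε * h (M.sol g ε) := by
        refine Finset.sum_congr rfl fun ε _ => ?_
        have hiff : ∀ z, M.Solves g ε z ↔ z = M.sol g ε := fun z =>
          ⟨fun hz => (sol_eq M hg hz).symm, fun hz => hz ▸ sol_solves M hg ε⟩
        rw [Finset.sum_congr rfl fun z _ => if_congr (hiff z) rfl rfl,
          Finset.sum_ite_eq' Finset.univ (M.sol g ε) (fun z => M.Pjoint ε * h z)]
        simp

lemma pushforward_gd (d : M.Dom M.D) (h : (∀ v, M.Dom v) → ℝ) :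
    ∑ ε : ∀ v, M.ExoDom v, M.Pjoint ε * h (M.sol (gd M d) ε)
      = ∑ z : ∀ v, M.Dom v, (∏ v : V, qd M d v z) * h z := by
  rw [pushforward M (gd_adapted M d) h]
  refine Finset.sum_congr rfl fun z _ => ?_
  congr 1
  refine Finset.prod_congr rfl fun v _ => ?_
  by_cases hv : v = M.D
  · subst hv
    simp only [gd_D, qd, if_pos rfl]
    by_cases hz : z M.D = d
    · rw [if_pos hz]
      rw [Finset.sum_congr rfl fun e _ => if_pos hz]
      exact P_univ_sum M M.D
    · rw [if_neg hz]
      rw [Finset.sum_congr rfl fun e _ => if_neg hz]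
      simp
  · rw [qd, if_neg hv]
    unfold q
    refine Finset.sum_congr rfl fun e _ => ?_
    rw [gd_ne M d hv]

def DepOn (f : (∀ v, M.Dom v) → ℝ) (T : Set V) : Prop :=
  ∀ z z', (∀ v ∈ T, z v = z' v) → f z = f z'

lemma depOn_mono {f T T'} (hT : T ⊆ T') (h : DepOn M f T) : DepOn M f T' :=
  fun z z' hz => h z z' (fun v hv => hz v (hT hv))

lemma depOn_mul {f g T} (hf : DepOn M f T) (hg : DepOn M g T) :
    DepOn M (fun z => f z * g z) T := by
  intro z z' hz
  show f z * g z = f z' * g z'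
  rw [hf z z' hz, hg z z' hz]

lemma depOn_prod {F : Finset V} {f : V → (∀ p, M.Dom p) → ℝ} {T}
    (h : ∀ v ∈ F, DepOn M (f v) T) : DepOn M (fun z => ∏ v ∈ F, f v z) T :=
  fun z z' hz => Finset.prod_congr rfl fun v hv => h v hv z z' hz

lemma q_depOn (v : V) : DepOn M (q M v) ({v} ∪ {p | M.Edge p v}) := by
  intro z z' hz
  unfold q
  refine Finset.sum_congr rfl fun e _ => ?_
  have h1 : z v = z' v := hz v (Or.inl rfl)
  have h2 : M.f v z e = M.f v z' e := M.localDep v z z' e (fun p hp => hz p (Or.inr hp))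
  rw [h1, h2]

lemma q_sum_one (v : V) (z : ∀ p, M.Dom p) :
    ∑ c : M.Dom v, q M v (Function.update z v c) = 1 := by
  have hq : ∀ c, q M v (Function.update z v c)
      = ∑ e : M.ExoDom v, if c = M.f v z e then M.P v e else 0 := by
    intro c
    unfold q
    refine Finset.sum_congr rfl fun e _ => ?_
    have h1 : Function.update z v c v = c := Function.update_self v c z
    have h2 : M.f v (Function.update z v c) e = M.f v z e :=
      M.localDep v _ _ e (fun p hp =>
        Function.update_of_ne (fun hpv => no_self_edge M v (by rw [hpv] at hp; exact hp)) c z)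
    rw [h1, h2]
  rw [Finset.sum_congr rfl fun c _ => hq c, Finset.sum_comm]
  rw [Finset.sum_congr rfl fun e _ =>
    Finset.sum_ite_eq' Finset.univ (M.f v z e) (fun _ => M.P v e)]
  simp only [Finset.mem_univ, if_true]
  exact P_univ_sum M v

lemma qd_depOn (d : M.Dom M.D) (v : V) :
    DepOn M (qd M d v) ({v} ∪ {p | M.Edge p v}) := by
  by_cases hv : v = M.D
  · subst hv
    intro z z' hz
    unfold qd
    rw [if_pos rfl, if_pos rfl, hz M.D (Or.inl rfl)]
  · intro z z' hz
    unfold qd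
    rw [if_neg hv, if_neg hv]
    exact q_depOn M v z z' hz

lemma pjoint_nonneg (ε : ∀ v, M.ExoDom v) : 0 ≤ M.Pjoint ε :=
  Finset.prod_nonneg fun v _ => M.Pnonneg v (ε v)

end Pushforward


/-! ### Part C: marginalization and exo splitting -/

section Marg

variable (M : SCIM V)

lemma pjoint_update (ε : ∀ v, M.ExoDom v) (c : M.ExoDom M.D) :
    M.Pjoint (Function.update ε M.D c)
      = M.P M.D c * ∏ v ∈ Finset.univ.erase M.D, M.P v (ε v) := by
  unfold SCIM.Pjoint
  rw [← Finset.mul_prod_erase Finset.univ _ (Finset.mem_univ M.D)]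
  congr 1
  · rw [Function.update_self]
  · refine Finset.prod_congr rfl fun v hv => ?_
    rw [Function.update_of_ne (Finset.ne_of_mem_erase hv)]

lemma exo_split (h : (∀ v, M.ExoDom v) → ℝ)
    (hh : ∀ ε c, h (Function.update ε M.D c) = h ε) (e : M.ExoDom M.D) :
    ∑ ε : ∀ v, M.ExoDom v, M.Pjoint ε * ((if ε M.D = e then (1:ℝ) else 0) * h ε)
      = M.P M.D e * ∑ ε : ∀ v, M.ExoDom v, M.Pjoint ε * h ε := by
  have hcard : (0:ℝ) < (Fintype.card (M.ExoDom M.D) : ℝ) := by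
    exact_mod_cast Fintype.card_pos
  apply mul_left_cancel₀ (ne_of_gt hcard)
  rw [← sum_update_eq_card_mul M.ExoDom M.D
    (fun ε => M.Pjoint ε * ((if ε M.D = e then (1:ℝ) else 0) * h ε))]
  have hL : ∀ ε : ∀ v, M.ExoDom v,
      (∑ c : M.ExoDom M.D, M.Pjoint (Function.update ε M.D c) *
        ((if Function.update ε M.D c M.D = e then (1:ℝ) else 0) *
          h (Function.update ε M.D c)))
      = M.P M.D e * ((∏ v ∈ Finset.univ.erase M.D, M.P v (ε v)) * h ε) := by
    intro ε
    have : ∀ c : M.ExoDom M.D,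
        M.Pjoint (Function.update ε M.D c) *
          ((if Function.update ε M.D c M.D = e then (1:ℝ) else 0) *
            h (Function.update ε M.D c))
        = if c = e then (M.P M.D c * ((∏ v ∈ Finset.univ.erase M.D, M.P v (ε v)) * h ε)) else 0 := by
      intro c
      rw [pjoint_update M ε c, hh ε c, Function.update_self]
      by_cases hc : c = e
      · rw [if_pos hc, if_pos hc]; ring
      · rw [if_neg hc, if_neg hc]; ring
    rw [Finset.sum_congr rfl fun c _ => this c,
      Finset.sum_ite_eq' Finset.univ e
        (fun c => M.P M.D c * ((∏ v ∈ Finset.univ.erase M.D, M.P v (ε v)) * h ε))]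
    rw [if_pos (Finset.mem_univ e)]
  rw [Finset.sum_congr rfl fun ε _ => hL ε]
  -- RHS
  have hR : (Fintype.card (M.ExoDom M.D) : ℝ) *
      (M.P M.D e * ∑ ε : ∀ v, M.ExoDom v, M.Pjoint ε * h ε)
      = M.P M.D e * ((Fintype.card (M.ExoDom M.D) : ℝ) *
          ∑ ε : ∀ v, M.ExoDom v, M.Pjoint ε * h ε) := by ring
  rw [hR, ← sum_update_eq_card_mul M.ExoDom M.D (fun ε => M.Pjoint ε * h ε)]
  have hR2 : ∀ ε : ∀ v, M.ExoDom v,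
      (∑ c : M.ExoDom M.D, M.Pjoint (Function.update ε M.D c) * h (Function.update ε M.D c))
      = (∏ v ∈ Finset.univ.erase M.D, M.P v (ε v)) * h ε := by
    intro ε
    have : ∀ c : M.ExoDom M.D,
        M.Pjoint (Function.update ε M.D c) * h (Function.update ε M.D c)
        = M.P M.D c * ((∏ v ∈ Finset.univ.erase M.D, M.P v (ε v)) * h ε) := by
      intro c
      rw [pjoint_update M ε c, hh ε c]; ring
    rw [Finset.sum_congr rfl fun c _ => this c, ← Finset.sum_mul, P_univ_sum M M.D, one_mul]
  rw [Finset.sum_congr rfl fun ε _ => hR2 ε, Finset.mul_sum]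

lemma marg (A : Finset V) (hD : M.D ∈ A)
    (hclosed : ∀ p v, M.Edge p v → v ∈ A → p ∈ A)
    (d : M.Dom M.D) (h : (∀ v, M.Dom v) → ℝ) (hdep : DepOn M h (A : Set V)) :
    (∏ v ∈ Finset.univ \ A, (Fintype.card (M.Dom v) : ℝ)) *
      ∑ z : ∀ v, M.Dom v, (∏ v : V, qd M d v z) * h z
    = ∑ z : ∀ v, M.Dom v, (∏ v ∈ A, qd M d v z) * h z := by
  suffices H : ∀ n (B : Finset V), A ⊆ B → (B \ A).card = n →
      (∏ v ∈ B \ A, (Fintype.card (M.Dom v) : ℝ)) *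
        ∑ z : ∀ v, M.Dom v, (∏ v ∈ B, qd M d v z) * h z
      = ∑ z : ∀ v, M.Dom v, (∏ v ∈ A, qd M d v z) * h z by
    exact H (Finset.univ \ A).card Finset.univ (Finset.subset_univ A) rfl
  intro n
  induction n with
  | zero =>
      intro B hAB hcard
      have hBA : B = A := by
        apply Finset.Subset.antisymm _ hAB
        intro x hx
        by_contra hxA
        have hmem : x ∈ B \ A := Finset.mem_sdiff.2 ⟨hx, hxA⟩
        rw [Finset.card_eq_zero.1 hcard] at hmem
        exact absurd hmem (Finset.notMem_empty x)
      subst hBA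
      simp
  | succ n ih =>
      intro B hAB hcard
      have hne : (B \ A).Nonempty := Finset.card_pos.1 (by omega)
      obtain ⟨v₀, hv₀mem, hv₀max⟩ :=
        (wf_gt M).has_min {v | v ∈ B \ A} ⟨hne.choose, hne.choose_spec⟩
      have hv₀mem' : v₀ ∈ B \ A := hv₀mem
      have hv₀B : v₀ ∈ B := (Finset.mem_sdiff.1 hv₀mem').1
      have hv₀A : v₀ ∉ A := (Finset.mem_sdiff.1 hv₀mem').2
      have hv₀D : v₀ ≠ M.D := fun hEq => hv₀A (hEq ▸ hD)
      have hchild : ∀ c, M.Edge v₀ c → c ∉ B := by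
        intro c hc hcB
        by_cases hcA : c ∈ A
        · exact hv₀A (hclosed v₀ c hc hcA)
        · exact hv₀max c (Finset.mem_sdiff.2 ⟨hcB, hcA⟩) (Relation.TransGen.single hc)
      set G : (∀ v, M.Dom v) → ℝ := fun z => (∏ v ∈ B.erase v₀, qd M d v z) * h z with hG
      have hGinv : ∀ z c, G (Function.update z v₀ c) = G z := by
        intro z c
        have hupd : ∀ (T : Set V), v₀ ∉ T → ∀ v ∈ T, Function.update z v₀ c v = z v :=
          fun T hT v hv => Function.update_of_ne (fun hEq => hT (by rw [← hEq]; exact hv)) c z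
        show (∏ v ∈ B.erase v₀, qd M d v (Function.update z v₀ c)) * h (Function.update z v₀ c)
          = (∏ v ∈ B.erase v₀, qd M d v z) * h z
        have h1 : (∏ v ∈ B.erase v₀, qd M d v (Function.update z v₀ c))
            = ∏ v ∈ B.erase v₀, qd M d v z := by
          refine Finset.prod_congr rfl fun v hv => ?_
          refine qd_depOn M d v _ _ ?_
          refine hupd _ ?_
          rintro (rfl | hpa)
          · exact (Finset.mem_erase.1 hv).1 rfl
          · exact hchild v hpa (Finset.mem_erase.1 hv).2
        have h2 : h (Function.update z v₀ c) = h z :=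
          hdep _ _ (hupd _ (fun hv => hv₀A hv))
        rw [h1, h2]
      have hsum : (Fintype.card (M.Dom v₀) : ℝ) *
          ∑ z : ∀ v, M.Dom v, qd M d v₀ z * G z = ∑ z : ∀ v, M.Dom v, G z := by
        refine sum_out M.Dom v₀ (qd M d v₀) G hGinv ?_
        intro z
        have : ∀ c : M.Dom v₀, qd M d v₀ (Function.update z v₀ c)
            = q M v₀ (Function.update z v₀ c) := by
          intro c
          unfold qd
          rw [if_neg hv₀D]
        rw [Finset.sum_congr rfl fun c _ => this c]
        exact q_sum_one M v₀ z
      have hsplit : ∀ z : ∀ v, M.Dom v,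
          (∏ v ∈ B, qd M d v z) * h z = qd M d v₀ z * G z := by
        intro z
        rw [hG, ← Finset.mul_prod_erase B _ hv₀B]
        ring
      rw [Finset.sum_congr rfl fun z _ => hsplit z]
      have hprod : (∏ v ∈ B \ A, (Fintype.card (M.Dom v) : ℝ))
          = (Fintype.card (M.Dom v₀) : ℝ) *
              ∏ v ∈ (B.erase v₀) \ A, (Fintype.card (M.Dom v) : ℝ) := by
        rw [Finset.erase_sdiff_comm]
        exact (Finset.mul_prod_erase _ _ hv₀mem').symm
      rw [hprod, mul_assoc]
      rw [show (∏ v ∈ (B.erase v₀) \ A, (Fintype.card (M.Dom v) : ℝ)) *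
            ∑ z : ∀ v, M.Dom v, qd M d v₀ z * G z
          = (∏ v ∈ (B.erase v₀) \ A, (Fintype.card (M.Dom v) : ℝ)) *
            ∑ z : ∀ v, M.Dom v, qd M d v₀ z * G z from rfl]
      rw [show (Fintype.card (M.Dom v₀) : ℝ) *
            ((∏ v ∈ (B.erase v₀) \ A, (Fintype.card (M.Dom v) : ℝ)) *
              ∑ z : ∀ v, M.Dom v, qd M d v₀ z * G z)
          = (∏ v ∈ (B.erase v₀) \ A, (Fintype.card (M.Dom v) : ℝ)) *
            ((Fintype.card (M.Dom v₀) : ℝ) * ∑ z : ∀ v, M.Dom v, qd M d v₀ z * G z)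
          from by ring, hsum]
      have hAe : A ⊆ B.erase v₀ :=
        fun x hx => Finset.mem_erase.2 ⟨fun hEq => hv₀A (hEq ▸ hx), hAB hx⟩
      have hce : ((B.erase v₀) \ A).card = n := by
        rw [Finset.erase_sdiff_comm, Finset.card_erase_of_mem hv₀mem', hcard]
        omega
      exact ih (B.erase v₀) hAe hce

end Marg


/-! ### Part E: the swapping (conditional independence) lemma -/

section Swap

variable (M : SCIM V)

lemma swapCI (LS PS : Set V) (G a₁ a₂ b₁ b₂ : (∀ v, M.Dom v) → ℝ)
    (hGdep : DepOn M G PS)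
    (hGpin : ∀ z z', G z ≠ 0 → G z' ≠ 0 → ∀ v ∈ PS, z v = z' v)
    (ha₁ : DepOn M a₁ (LS ∪ PS)) (ha₂ : DepOn M a₂ (LS ∪ PS))
    (hb₁ : DepOn M b₁ LSᶜ) (hb₂ : DepOn M b₂ LSᶜ) :
    (∑ z : ∀ v, M.Dom v, G z * a₁ z * b₁ z) * (∑ z : ∀ v, M.Dom v, G z * a₂ z * b₂ z)
      = (∑ z : ∀ v, M.Dom v, G z * a₂ z * b₁ z) *
          (∑ z : ∀ v, M.Dom v, G z * a₁ z * b₂ z) := by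
  classical
  set m : (∀ v, M.Dom v) → (∀ v, M.Dom v) → (∀ v, M.Dom v) :=
    fun z z' v => if v ∈ LS ∪ PS then z v else z' v with hm
  have hmA : ∀ z z', ∀ v ∈ LS ∪ PS, m z z' v = z v := by
    intro z z' v hv; simp only [hm]; rw [if_pos hv]
  have hmB : ∀ z z', ∀ v, v ∉ LS ∪ PS → m z z' v = z' v := by
    intro z z' v hv; simp only [hm]; rw [if_neg hv]
  have hminv : Function.Involutive
      (fun p : (∀ v, M.Dom v) × (∀ v, M.Dom v) => (m p.1 p.2, m p.2 p.1)) := by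
    rintro ⟨z, z'⟩
    have h1 : m (m z z') (m z' z) = z := by
      funext v
      by_cases hv : v ∈ LS ∪ PS
      · rw [hmA _ _ _ hv, hmA _ _ _ hv]
      · rw [hmB _ _ _ hv, hmB _ _ _ hv]
    have h2 : m (m z' z) (m z z') = z' := by
      funext v
      by_cases hv : v ∈ LS ∪ PS
      · rw [hmA _ _ _ hv, hmA _ _ _ hv]
      · rw [hmB _ _ _ hv, hmB _ _ _ hv]
    simp only [Prod.mk.injEq]
    exact ⟨h1, h2⟩
  set f : (∀ v, M.Dom v) × (∀ v, M.Dom v) → ℝ :=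
    fun p => G p.1 * a₁ p.1 * b₁ p.1 * (G p.2 * a₂ p.2 * b₂ p.2) with hf
  set g : (∀ v, M.Dom v) × (∀ v, M.Dom v) → ℝ :=
    fun p => G p.1 * a₂ p.1 * b₁ p.1 * (G p.2 * a₁ p.2 * b₂ p.2) with hgdef
  have key : ∀ p, f ((fun p : (∀ v, M.Dom v) × (∀ v, M.Dom v) => (m p.1 p.2, m p.2 p.1)) p)
      = g (p.2, p.1) := by
    rintro ⟨z, z'⟩
    simp only [hf, hgdef]
    have hG1 : G (m z z') = G z := hGdep _ _ (fun v hv => hmA z z' v (Or.inr hv))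
    have hG2 : G (m z' z) = G z' := hGdep _ _ (fun v hv => hmA z' z v (Or.inr hv))
    have hA1 : a₁ (m z z') = a₁ z := ha₁ _ _ (fun v hv => hmA z z' v hv)
    have hA2 : a₂ (m z' z) = a₂ z' := ha₂ _ _ (fun v hv => hmA z' z v hv)
    rw [hG1, hG2, hA1, hA2]
    by_cases hz : G z = 0
    · rw [hz]; ring
    by_cases hz' : G z' = 0
    · rw [hz']; ring
    have hpin := hGpin z z' hz hz'
    have hB1 : b₁ (m z z') = b₁ z' := by
      refine hb₁ _ _ (fun v hv => ?_)
      by_cases hvm : v ∈ LS ∪ PS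
      · rcases hvm with hvm | hvm
        · exact absurd hvm hv
        · rw [hmA z z' v (Or.inr hvm)]; exact hpin v hvm
      · exact hmB z z' v hvm
    have hB2 : b₂ (m z' z) = b₂ z := by
      refine hb₂ _ _ (fun v hv => ?_)
      by_cases hvm : v ∈ LS ∪ PS
      · rcases hvm with hvm | hvm
        · exact absurd hvm hv
        · rw [hmA z' z v (Or.inr hvm)]; exact (hpin v hvm).symm
      · exact hmB z' z v hvm
    rw [hB1, hB2]
    ring
  calc (∑ z : ∀ v, M.Dom v, G z * a₁ z * b₁ z) * (∑ z : ∀ v, M.Dom v, G z * a₂ z * b₂ z)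
      = ∑ p : (∀ v, M.Dom v) × (∀ v, M.Dom v), f p := by
        rw [Finset.sum_mul_sum]
        exact (Fintype.sum_prod_type (f := f)).symm
    _ = ∑ p : (∀ v, M.Dom v) × (∀ v, M.Dom v),
          f ((fun p : (∀ v, M.Dom v) × (∀ v, M.Dom v) => (m p.1 p.2, m p.2 p.1)) p) := by
        exact (Equiv.sum_comp hminv.toPerm f).symm
    _ = ∑ p : (∀ v, M.Dom v) × (∀ v, M.Dom v), g (p.2, p.1) :=
        Finset.sum_congr rfl fun p _ => key p
    _ = ∑ p : (∀ v, M.Dom v) × (∀ v, M.Dom v), g p := by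
        exact Equiv.sum_comp (Equiv.prodComm _ _) g
    _ = (∑ z : ∀ v, M.Dom v, G z * a₂ z * b₁ z) *
          (∑ z : ∀ v, M.Dom v, G z * a₁ z * b₂ z) := by
        rw [Finset.sum_mul_sum]
        exact Fintype.sum_prod_type (f := g)

end Swap


/-! ### Part D: graph side -/

section Graph

variable (M : SCIM V) (X : V)

def Sset : Set V := {v | (M.Edge v M.D ∧ v ≠ X) ∨ v = M.D}

def DSset : Set V := {u | u ∈ M.Util ∧ Relation.ReflTransGen M.Edge M.D u}

def AnSet : Set V :=
  {v | ∃ t, (t = X ∨ t ∈ Sset M X ∨ t ∈ DSset M) ∧ Relation.ReflTransGen M.Edge v t}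

lemma X_ne_D (hXpa : M.Edge X M.D) : X ≠ M.D := edge_ne M hXpa

lemma X_not_S (hXpa : M.Edge X M.D) : X ∉ Sset M X := by
  rintro (⟨_, hne⟩ | hXD)
  · exact hne rfl
  · exact X_ne_D M X hXpa hXD

lemma D_mem_S : M.D ∈ Sset M X := Or.inr rfl

lemma S_sub_An : Sset M X ⊆ AnSet M X :=
  fun s hs => ⟨s, Or.inr (Or.inl hs), Relation.ReflTransGen.refl⟩

lemma X_mem_An : X ∈ AnSet M X := ⟨X, Or.inl rfl, Relation.ReflTransGen.refl⟩

lemma DS_sub_An : DSset M ⊆ AnSet M X :=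
  fun u hu => ⟨u, Or.inr (Or.inr hu), Relation.ReflTransGen.refl⟩

lemma An_closed {p v : V} (hpv : M.Edge p v) (hv : v ∈ AnSet M X) : p ∈ AnSet M X := by
  obtain ⟨t, ht, hrtg⟩ := hv
  exact ⟨t, ht, Relation.ReflTransGen.head hpv hrtg⟩

lemma an_cases (hXpa : M.Edge X M.D) {v : V} (hv : v ∈ AnSet M X)
    (hnod : ∀ w, Relation.ReflTransGen M.Edge v w → w ∉ Sset M X) :
    ∃ u, u ∈ DSset M ∧ Relation.ReflTransGen M.Edge v u := by
  obtain ⟨t, ht, hrtg⟩ := hv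
  rcases ht with rfl | hS | hDS
  · exact absurd (D_mem_S M t) (hnod M.D (hrtg.tail hXpa))
  · exact absurd hS (hnod t hrtg)
  · exact ⟨t, hDS, hrtg⟩

def symE : V → V → Prop := fun a b => M.Edge a b ∨ M.Edge b a

def NB : List V → Prop
  | a :: b :: c :: r => ¬ BlockedTriple M.Edge (Sset M X) a b c ∧ NB (b :: c :: r)
  | _ => True

def OKw (q : List V) : Prop := q.getLast? = some X ∧ q.Chain' (symE M) ∧ NB M X q

def GW (v : V) : Prop := ∃ t, OKw M X (v :: t)

lemma NB_tail {w : V} {q : List V} (h : NB M X (w :: q)) : NB M X q := by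
  match q with
  | [] => trivial
  | [x] => trivial
  | x :: y :: t => exact h.2

lemma NB_decomp : ∀ (l₁ : List V) {a b c : V} {r : List V},
    NB M X (l₁ ++ a :: b :: c :: r) → ¬ BlockedTriple M.Edge (Sset M X) a b c := by
  intro l₁
  induction l₁ with
  | nil => intro a b c r h; exact h.1
  | cons w l₁ ih => intro a b c r h; exact ih (NB_tail M X h)

lemma Blocked_symm {a b c : V} (h : BlockedTriple M.Edge (Sset M X) a b c) :
    BlockedTriple M.Edge (Sset M X) c b a := by
  rcases h with ⟨h1, h2, h3⟩ | ⟨h1, h2⟩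
  · exact Or.inl ⟨h2, h1, h3⟩
  · exact Or.inr ⟨fun ⟨u1, u2⟩ => h1 ⟨u2, u1⟩, h2⟩

lemma not_blocked {a b c : V} (hbS : b ∉ Sset M X)
    (hdesc : (M.Edge a b ∧ M.Edge c b) →
      ∃ w, Relation.ReflTransGen M.Edge b w ∧ w ∈ Sset M X) :
    ¬ BlockedTriple M.Edge (Sset M X) a b c := by
  rintro (⟨h1, h2, hall⟩ | ⟨_, hb⟩)
  · obtain ⟨w, hw1, hw2⟩ := hdesc ⟨h1, h2⟩
    exact hall w hw1 hw2
  · exact hbS hb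

lemma not_blocked_collider {a b c : V} (hcol : M.Edge a b ∧ M.Edge c b)
    (hdesc : ∃ w, Relation.ReflTransGen M.Edge b w ∧ w ∈ Sset M X) :
    ¬ BlockedTriple M.Edge (Sset M X) a b c := by
  rintro (⟨h1, h2, hall⟩ | ⟨h1, _⟩)
  · obtain ⟨w, hw1, hw2⟩ := hdesc
    exact hall w hw1 hw2
  · exact h1 hcol

lemma OKw_prepend {v : V} {t : List V} {w : V} (h : OKw M X (v :: t)) (he : symE M w v)
    (htri : ∀ t₀ t', t = t₀ :: t' → ¬ BlockedTriple M.Edge (Sset M X) w v t₀) :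
    OKw M X (w :: v :: t) := by
  obtain ⟨hlast, hchain, hnb⟩ := h
  refine ⟨by rw [List.getLast?_cons_cons]; exact hlast, List.IsChain.cons_cons he hchain, ?_⟩
  cases t with
  | nil => trivial
  | cons t₀ t' => exact ⟨htri t₀ t' rfl, hnb⟩

lemma chain_mem_rtg : ∀ {l : List V} {c : V}, List.Chain M.Edge c l →
    ∀ x ∈ l, Relation.ReflTransGen M.Edge c x := by
  intro l
  induction l with
  | nil => intro c _ x hx; exact absurd hx List.not_mem_nil
  | cons a l' ih =>
      intro c hchain x hx
      have h1 : M.Edge c a := (List.chain_cons.1 hchain).1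
      have h2 : List.Chain M.Edge a l' := (List.chain_cons.1 hchain).2
      rcases List.mem_cons.1 hx with rfl | hx'
      · exact Relation.ReflTransGen.single h1
      · exact (Relation.ReflTransGen.single h1).trans (ih h2 x hx')

lemma descendOK : ∀ (l : List V) (c : V) (t : List V), List.Chain M.Edge c l →
    (∀ x ∈ l, x ∉ Sset M X) → c ∉ Sset M X → OKw M X (c :: t) →
    ∀ u, (c :: l).getLast? = some u → GW M X u := by
  intro l
  induction l with
  | nil =>
      intro c t _ _ _ hOK u hu
      have hcu : u = c := by simpa using hu.symm
      exact ⟨t, hcu ▸ hOK⟩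
  | cons t₁ l' ih =>
      intro c t hchain hS hcS hOK u hu
      have he : M.Edge c t₁ := (List.chain_cons.1 hchain).1
      have hchain' : List.Chain M.Edge t₁ l' := (List.chain_cons.1 hchain).2
      have ht₁S : t₁ ∉ Sset M X := hS t₁ List.mem_cons_self
      have hOK' : OKw M X (t₁ :: c :: t) := by
        refine OKw_prepend M X hOK (Or.inr he) ?_
        intro t₀ t'' _
        refine not_blocked M X hcS (fun hcol =>
          absurd (Relation.TransGen.tail (Relation.TransGen.single he) hcol.1)
            (M.acyclic c))
      refine ih t₁ (c :: t) hchain' (fun x hx => hS x (List.mem_cons_of_mem t₁ hx)) ht₁S hOK' u ?_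
      rw [List.getLast?_cons_cons] at hu
      exact hu

lemma rtg_GW {c u : V} {t : List V} (hOK : OKw M X (c :: t)) (hcS : c ∉ Sset M X)
    (hnod : ∀ w, Relation.ReflTransGen M.Edge c w → w ∉ Sset M X)
    (hcu : Relation.ReflTransGen M.Edge c u) : GW M X u := by
  obtain ⟨l, hchain, hlast⟩ := List.exists_isChain_cons_of_relationReflTransGen hcu
  refine descendOK M X l c t hchain
    (fun x hx => hnod x (chain_mem_rtg M hchain x hx)) hcS hOK u ?_
  rw [List.getLast?_eq_getLast (List.cons_ne_nil _ _), hlast]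

lemma gw_ds_false (hXpa : M.Edge X M.D)
    (hsep : DSep M.Edge {X} (DSset M) (Sset M X)) {u : V} (hu : u ∈ DSset M)
    (h : GW M X u) : False := by
  obtain ⟨t, hlast, hchain, hnb⟩ := h
  have hwalk : IsWalk M.Edge ((u :: t).reverse) := by
    constructor
    · simp
    · refine List.isChain_reverse.2 ?_
      exact hchain.imp (fun a b hab => hab.symm)
  have hblocks := hsep ((u :: t).reverse) hwalk
    ⟨X, rfl, by rw [List.head?_reverse]; exact hlast⟩
    ⟨u, hu, by rw [List.getLast?_reverse]; rfl⟩
  rcases hblocks with ⟨x, hx, hxS⟩ | ⟨x, hx, hxS⟩ | ⟨l₁, a, b, c, r, hEq, hblk⟩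
  · rw [List.head?_reverse, hlast] at hx
    have : x = X := by injection hx.symm
    exact X_not_S M X hXpa (this ▸ hxS)
  · rw [List.getLast?_reverse] at hx
    have : x = u := by injection hx.symm
    subst this
    rcases hxS with ⟨hxD, _⟩ | hxD
    · exact M.utilNoChild x hu.1 M.D hxD
    · exact M.utilNotD (hxD ▸ hu.1)
  · have hq : u :: t = r.reverse ++ c :: b :: a :: l₁.reverse := by
      have h0 : u :: t = (l₁ ++ a :: b :: c :: r).reverse := by
        rw [← hEq, List.reverse_reverse]
      simpa using h0
    rw [hq] at hnb
    exact NB_decomp M X r.reverse hnb (Blocked_symm M X hblk)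

def MA : V → V → Prop := fun v w =>
  v ∈ AnSet M X ∧ w ∈ AnSet M X ∧ v ∉ Sset M X ∧ w ∉ Sset M X ∧
    (M.Edge v w ∨ M.Edge w v ∨ ∃ c, c ∈ AnSet M X ∧ M.Edge v c ∧ M.Edge w c)

lemma MA_symm {v w : V} (h : MA M X v w) : MA M X w v := by
  obtain ⟨h1, h2, h3, h4, h5⟩ := h
  refine ⟨h2, h1, h4, h3, ?_⟩
  rcases h5 with h | h | ⟨c, hc1, hc2, hc3⟩
  · exact Or.inr (Or.inl h)
  · exact Or.inl h
  · exact Or.inr (Or.inr ⟨c, hc1, hc3, hc2⟩)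

lemma step_GW (hXpa : M.Edge X M.D)
    (hsep : DSep M.Edge {X} (DSset M) (Sset M X)) {v w : V}
    (hGW : GW M X v) (hMA : MA M X v w) : GW M X w := by
  obtain ⟨t, hOK⟩ := hGW
  obtain ⟨hvA, hwA, hvS, hwS, hedge⟩ := hMA
  have detour : ∀ (c' : V) (t' : List V), OKw M X (c' :: t') → c' ∈ AnSet M X →
      (∀ z, Relation.ReflTransGen M.Edge c' z → z ∉ Sset M X) → False := by
    intro c' t' hOK' hc'A hnod
    obtain ⟨u, huDS, hcu⟩ := an_cases M X hXpa hc'A hnod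
    exact gw_ds_false M X hXpa hsep huDS
      (rtg_GW M X hOK' (hnod c' Relation.ReflTransGen.refl) hnod hcu)
  rcases hedge with he | he | ⟨c, hcA, hvc, hwc⟩
  · -- direct edge v → w or w → v
    refine ⟨v :: t, OKw_prepend M X hOK (Or.inr he) ?_⟩
    intro t₀ t' hEq
    by_cases hnod : ∀ z, Relation.ReflTransGen M.Edge v z → z ∉ Sset M X
    · exact absurd (detour v t hOK hvA hnod) id
    · push_neg at hnod
      obtain ⟨z, hz1, hz2⟩ := hnod
      exact not_blocked M X hvS (fun _ => ⟨z, hz1, hz2⟩)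
  · refine ⟨v :: t, OKw_prepend M X hOK (Or.inl he) ?_⟩
    intro t₀ t' hEq
    by_cases hnod : ∀ z, Relation.ReflTransGen M.Edge v z → z ∉ Sset M X
    · exact absurd (detour v t hOK hvA hnod) id
    · push_neg at hnod
      obtain ⟨z, hz1, hz2⟩ := hnod
      exact not_blocked M X hvS (fun _ => ⟨z, hz1, hz2⟩)
  · -- common child c
    have hOK1 : OKw M X (c :: v :: t) := by
      refine OKw_prepend M X hOK (Or.inr hvc) ?_
      intro t₀ t' _
      exact not_blocked M X hvS (fun hcol =>
        absurd (Relation.TransGen.tail (Relation.TransGen.single hvc) hcol.1) (M.acyclic v))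
    by_cases hnod : ∀ z, Relation.ReflTransGen M.Edge c z → z ∉ Sset M X
    · exact absurd (detour c (v :: t) hOK1 hcA hnod) id
    · push_neg at hnod
      obtain ⟨z, hz1, hz2⟩ := hnod
      refine ⟨c :: v :: t, OKw_prepend M X hOK1 (Or.inl hwc) ?_⟩
      intro t₀ t' hEq
      have ht₀ : v = t₀ := by injection hEq
      subst ht₀
      exact not_blocked_collider M X ⟨hwc, hvc⟩ ⟨z, hz1, hz2⟩

lemma reach_GW (hXpa : M.Edge X M.D)
    (hsep : DSep M.Edge {X} (DSset M) (Sset M X)) {v : V}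
    (h : Relation.ReflTransGen (MA M X) X v) : GW M X v := by
  induction h with
  | refl =>
      exact ⟨[], by simp [OKw], List.isChain_singleton X, trivial⟩
  | tail hab hbc ih => exact step_GW M X hXpa hsep ih hbc

lemma reach_not_DS (hXpa : M.Edge X M.D)
    (hsep : DSep M.Edge {X} (DSset M) (Sset M X)) {u : V} (hu : u ∈ DSset M)
    (hr : Relation.ReflTransGen (MA M X) X u) : False :=
  gw_ds_false M X hXpa hsep hu (reach_GW M X hXpa hsep hr)

end Graph


/-! ### Part F: main constructions -/

section Main

variable (M : SCIM V) (X : V)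

def base : (∀ v, M.ExoDom v) → ∀ v, M.Dom v := fun ε => M.sol (gd M (M.dflt M.D)) ε

def DSF : Finset V := M.Util.filter (fun u => Relation.ReflTransGen M.Edge M.D u)

def CF : Finset V := M.Util.filter (fun u => ¬ Relation.ReflTransGen M.Edge M.D u)

def Psiv (z : ∀ v, M.Dom v) : ℝ := ∑ u ∈ DSF M, M.utilReal u (z u)

def Cv (z : ∀ v, M.Dom v) : ℝ := ∑ u ∈ CF M, M.utilReal u (z u)

def psif (d : M.Dom M.D) (ε : ∀ v, M.ExoDom v) : ℝ := Psiv M (M.sol (gd M d) ε)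

def S'F : Finset V := Finset.univ.filter (fun p => M.Edge p M.D ∧ p ≠ X)

def PaF : Finset V := Finset.univ.filter (fun p => M.Edge p M.D)

def Ind (T : Finset V) (y z : ∀ v, M.Dom v) : ℝ := if ∀ p ∈ T, z p = y p then 1 else 0

def IndX (x : M.Dom X) (z : ∀ v, M.Dom v) : ℝ := if z X = x then 1 else 0

def Vq (y : ∀ v, M.Dom v) (d : M.Dom M.D) : ℝ :=
  ∑ ε : ∀ v, M.ExoDom v, M.Pjoint ε * (Ind M (S'F M X) y (base M ε) * psif M d ε)

def Nbar (y : ∀ v, M.Dom v) : ℝ :=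
  ∑ ε : ∀ v, M.ExoDom v, M.Pjoint ε * Ind M (S'F M X) y (base M ε)

def Phx (y : ∀ v, M.Dom v) (x : M.Dom X) (d : M.Dom M.D) : ℝ :=
  ∑ ε : ∀ v, M.ExoDom v, M.Pjoint ε *
    (Ind M (S'F M X) y (base M ε) * (IndX M X x (base M ε) * psif M d ε))

def nsm (y : ∀ v, M.Dom v) (x : M.Dom X) : ℝ :=
  ∑ ε : ∀ v, M.ExoDom v, M.Pjoint ε *
    (Ind M (S'F M X) y (base M ε) * IndX M X x (base M ε))

lemma parent_nonDesc {p : V} (hp : M.Edge p M.D) :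
    ¬ Relation.ReflTransGen M.Edge M.D p :=
  fun h => M.acyclic M.D (Relation.TransGen.tail' h hp)

lemma gd_agree (d d' : M.Dom M.D) : ∀ v, v ≠ M.D → gd M d v = gd M d' v := by
  intro v hv
  rw [gd_ne M d hv, gd_ne M d' hv]

lemma base_eq_sol_gd (d : M.Dom M.D) (ε : ∀ v, M.ExoDom v) {p : V}
    (hp : ¬ Relation.ReflTransGen M.Edge M.D p) :
    M.sol (gd M d) ε p = base M ε p :=
  sol_agree_nonDesc M (gd_adapted M d) (gd_adapted M (M.dflt M.D))
    (gd_agree M d (M.dflt M.D)) ε p hp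

lemma exoElems_univ : M.exoElems = (Finset.univ : Finset (∀ v, M.ExoDom v)) := by
  unfold SCIM.exoElems
  congr 1

lemma EU_decomp (π : ((p : V) → M.Dom p) → M.ExoDom M.D → M.Dom M.D)
    (hπ : M.IsPolicy π) :
    M.EU π = (∑ ε : ∀ v, M.ExoDom v, M.Pjoint ε * Cv M (base M ε)) +
      ∑ ε : ∀ v, M.ExoDom v, M.Pjoint ε * psif M (π (base M ε) (ε M.D)) ε := by
  rw [SCIM.EU, SCIM.EUg, exoElems_univ]
  have hpt : ∀ ε : ∀ v, M.ExoDom v, M.TotalU (M.sol (M.gpol π) ε)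
      = Cv M (base M ε) + psif M (π (base M ε) (ε M.D)) ε := by
    intro ε
    have hagree : ∀ v, v ≠ M.D → M.gpol π v = gd M (M.dflt M.D) v := by
      intro v hv
      rw [gpol_ne M hv, gd_ne M _ hv]
    have hsolag : ∀ p, ¬ Relation.ReflTransGen M.Edge M.D p →
        M.sol (M.gpol π) ε p = base M ε p :=
      fun p hp => sol_agree_nonDesc M (gpol_adapted M hπ) (gd_adapted M (M.dflt M.D))
        hagree ε p hp
    have hC : (∑ u ∈ CF M, M.utilReal u (M.sol (M.gpol π) ε u)) = Cv M (base M ε) := by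
      refine Finset.sum_congr rfl fun u hu => ?_
      rw [hsolag u (Finset.mem_filter.1 hu).2]
    have hdec : M.sol (M.gpol π) ε M.D = π (base M ε) (ε M.D) := by
      rw [sol_gpol_D M hπ ε]
      refine hπ _ _ _ (fun p hp => hsolag p (parent_nonDesc M hp))
    have hΨ : (∑ u ∈ DSF M, M.utilReal u (M.sol (M.gpol π) ε u))
        = psif M (π (base M ε) (ε M.D)) ε := by
      unfold psif Psiv
      rw [← hdec]
      refine Finset.sum_congr rfl fun u _ => ?_
      rw [← sol_gpol_eq_gd M hπ ε]
    have hsplit : M.TotalU (M.sol (M.gpol π) ε)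
        = (∑ u ∈ CF M, M.utilReal u (M.sol (M.gpol π) ε u)) +
          (∑ u ∈ DSF M, M.utilReal u (M.sol (M.gpol π) ε u)) := by
      unfold SCIM.TotalU CF DSF
      rw [add_comm, Finset.sum_filter_add_sum_filter_not]
    rw [hsplit, hC, hΨ]
  rw [Finset.sum_congr rfl fun ε _ => by rw [hpt ε]]
  rw [← Finset.sum_add_distrib]
  exact Finset.sum_congr rfl fun ε _ => by ring

end Main


section Sides

variable (M : SCIM V) (X : V)

def Lset : Set V :=
  {v | (v ∈ AnSet M X ∧ v ∉ Sset M X ∧ Relation.ReflTransGen (MA M X) X v) ∨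
    (v ∈ Sset M X ∧ v ≠ M.D ∧
      ∃ p, M.Edge p v ∧ p ∈ AnSet M X ∧ p ∉ Sset M X ∧ Relation.ReflTransGen (MA M X) X p)}

def Rset : Set V := {v | v ∈ AnSet M X ∧ v ≠ M.D ∧ v ∉ Lset M X}

lemma X_mem_L (hXpa : M.Edge X M.D) : X ∈ Lset M X :=
  Or.inl ⟨X_mem_An M X, X_not_S M X hXpa, Relation.ReflTransGen.refl⟩

lemma L_sub_An : Lset M X ⊆ AnSet M X := by
  rintro v (⟨h1, _, _⟩ | ⟨h1, _, _⟩)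
  · exact h1
  · exact S_sub_An M X h1

lemma R_sub_An : Rset M X ⊆ AnSet M X := fun v hv => hv.1

lemma L_ne_D {v : V} (hv : v ∈ Lset M X) : v ≠ M.D := by
  rcases hv with ⟨_, hS, _⟩ | ⟨_, hne, _⟩
  · exact fun hEq => hS (hEq ▸ D_mem_S M X)
  · exact hne

lemma L_family {v p : V} (hv : v ∈ Lset M X) (hp : M.Edge p v) :
    p ∈ Lset M X ∪ Sset M X := by
  by_cases hpS : p ∈ Sset M X
  · exact Or.inr hpS
  have hpA : p ∈ AnSet M X := An_closed M X hp (L_sub_An M X hv)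
  rcases hv with ⟨hvA, hvS, hvr⟩ | ⟨hvS, _, p₀, hp₀v, hp₀A, hp₀S, hp₀r⟩
  · refine Or.inl (Or.inl ⟨hpA, hpS, hvr.tail ?_⟩)
    exact ⟨hvA, hpA, hvS, hpS, Or.inr (Or.inl hp)⟩
  · refine Or.inl (Or.inl ⟨hpA, hpS, hp₀r.tail ?_⟩)
    exact ⟨hp₀A, hpA, hp₀S, hpS, Or.inr (Or.inr ⟨v, S_sub_An M X hvS, hp₀v, hp⟩)⟩

lemma R_family {v p : V} (hv : v ∈ Rset M X) (hp : M.Edge p v) :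
    p ∈ Rset M X ∪ Sset M X := by
  by_cases hpS : p ∈ Sset M X
  · exact Or.inr hpS
  obtain ⟨hvA, hvD, hvL⟩ := hv
  have hpA : p ∈ AnSet M X := An_closed M X hp hvA
  have hpD : p ≠ M.D := fun hEq => hpS (hEq ▸ D_mem_S M X)
  refine Or.inl ⟨hpA, hpD, fun hpL => hvL ?_⟩
  rcases hpL with ⟨hpA', hpS', hpr⟩ | ⟨hpS', _, _⟩
  · by_cases hvS : v ∈ Sset M X
    · exact Or.inr ⟨hvS, hvD, p, hp, hpA', hpS', hpr⟩
    · exact Or.inl ⟨hvA, hvS, hpr.tail ⟨hpA', hvA, hpS', hvS, Or.inl hp⟩⟩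
  · exact absurd hpS' hpS

lemma DS_sub_R (hXpa : M.Edge X M.D)
    (hsep : DSep M.Edge {X} (DSset M) (Sset M X)) :
    DSset M ⊆ Rset M X := by
  intro u hu
  have huS : u ∉ Sset M X := by
    rintro (⟨hE, _⟩ | hE)
    · exact M.utilNoChild u hu.1 M.D hE
    · exact M.utilNotD (hE ▸ hu.1)
  refine ⟨DS_sub_An M X hu, fun hEq => M.utilNotD (hEq ▸ hu.1), fun hL => ?_⟩
  rcases hL with ⟨_, _, hr⟩ | ⟨hS, _, _⟩
  · exact reach_not_DS M X hXpa hsep hu hr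
  · exact huS hS

lemma An_partition {v : V} (hv : v ∈ AnSet M X) :
    v = M.D ∨ v ∈ Lset M X ∨ v ∈ Rset M X := by
  by_cases hD : v = M.D
  · exact Or.inl hD
  by_cases hL : v ∈ Lset M X
  · exact Or.inr (Or.inl hL)
  · exact Or.inr (Or.inr ⟨hv, hD, hL⟩)

lemma LR_disj {v : V} (hv : v ∈ Lset M X) : v ∉ Rset M X := fun hR => hR.2.2 hv

lemma X_not_R (hXpa : M.Edge X M.D) : X ∉ Rset M X := LR_disj M X (X_mem_L M X hXpa)

lemma S'_sub_S {p : V} (hp : M.Edge p M.D ∧ p ≠ X) : p ∈ Sset M X := Or.inl hp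

end Sides


section Diamond

variable (M : SCIM V) (X : V)

def AnF : Finset V := Finset.univ.filter (fun v => v ∈ AnSet M X)
def Lf : Finset V := Finset.univ.filter (fun v => v ∈ Lset M X)
def Rf : Finset V := Finset.univ.filter (fun v => v ∈ Rset M X)

lemma ind_depOn (T : Finset V) (y : ∀ v, M.Dom v) :
    DepOn M (fun z => Ind M T y z) {p | p ∈ T} := by
  intro z z' hz
  unfold Ind
  refine if_congr ?_ rfl rfl
  constructor <;> intro h p hp
  · rw [← hz p hp]; exact h p hp
  · rw [hz p hp]; exact h p hp

lemma indX_depOn (x : M.Dom X) : DepOn M (fun z => IndX M X x z) {X} := by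
  intro z z' hz
  show (if z X = x then (1:ℝ) else 0) = (if z' X = x then (1:ℝ) else 0)
  rw [hz X rfl]

lemma psiv_depOn : DepOn M (Psiv M) {u | u ∈ DSF M} := by
  intro z z' hz
  unfold Psiv
  exact Finset.sum_congr rfl fun u hu => by rw [hz u hu]

lemma qdD_depOn (d : M.Dom M.D) : DepOn M (qd M d M.D) {M.D} := by
  intro z z' hz
  unfold qd
  rw [if_pos rfl, if_pos rfl, hz M.D rfl]

lemma mem_LSPS {v : V} (h : v ∈ Lset M X ∪ Sset M X) :
    v ∈ (Lset M X \ Sset M X) ∪ Sset M X := by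
  by_cases hS : v ∈ Sset M X
  · exact Or.inr hS
  · rcases h with h | h
    · exact Or.inl ⟨h, hS⟩
    · exact absurd h hS

lemma RS_sub_LSc {v : V} (h : v ∈ Rset M X ∪ Sset M X) :
    v ∈ (Lset M X \ Sset M X)ᶜ := by
  rcases h with h | h
  · exact fun hv => h.2.2 hv.1
  · exact fun hv => hv.2 h

lemma diamond (hXpa : M.Edge X M.D)
    (hsep : DSep M.Edge {X} (DSset M) (Sset M X))
    (d : M.Dom M.D) (y : ∀ v, M.Dom v) (x : M.Dom X) :
    Phx M X y x d * Nbar M X y = Vq M X y d * nsm M X y x := by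
  classical
  -- value-level integrands
  set Is : (∀ v, M.Dom v) → ℝ := fun z => Ind M (S'F M X) y z with hIs
  set Ix : (∀ v, M.Dom v) → ℝ := fun z => IndX M X x z with hIx
  have hS'nd : ∀ p ∈ S'F M X, ¬ Relation.ReflTransGen M.Edge M.D p := by
    intro p hp
    exact parent_nonDesc M (Finset.mem_filter.1 hp).2.1
  have hXnd : ¬ Relation.ReflTransGen M.Edge M.D X := parent_nonDesc M hXpa
  have hIs_base : ∀ ε, Is (M.sol (gd M d) ε) = Ind M (S'F M X) y (base M ε) := by
    intro ε
    simp only [hIs]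
    unfold Ind
    refine if_congr ?_ rfl rfl
    constructor <;> intro h p hp
    · rw [← base_eq_sol_gd M d ε (hS'nd p hp)]; exact h p hp
    · rw [base_eq_sol_gd M d ε (hS'nd p hp)]; exact h p hp
  have hIx_base : ∀ ε, Ix (M.sol (gd M d) ε) = IndX M X x (base M ε) := by
    intro ε
    simp only [hIx]
    unfold IndX
    rw [base_eq_sol_gd M d ε hXnd]
  -- the four sums at value level
  have h1 : Phx M X y x d
      = ∑ z : ∀ v, M.Dom v, (∏ v : V, qd M d v z) * (Is z * (Ix z * Psiv M z)) := by
    rw [← pushforward_gd M d (fun z => Is z * (Ix z * Psiv M z))]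
    unfold Phx
    refine Finset.sum_congr rfl fun ε _ => ?_
    rw [hIs_base ε, hIx_base ε]
    rfl
  have h2 : Nbar M X y = ∑ z : ∀ v, M.Dom v, (∏ v : V, qd M d v z) * Is z := by
    rw [← pushforward_gd M d Is]
    unfold Nbar
    exact Finset.sum_congr rfl fun ε _ => by rw [hIs_base ε]
  have h3 : Vq M X y d
      = ∑ z : ∀ v, M.Dom v, (∏ v : V, qd M d v z) * (Is z * Psiv M z) := by
    rw [← pushforward_gd M d (fun z => Is z * Psiv M z)]
    unfold Vq
    refine Finset.sum_congr rfl fun ε _ => ?_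
    rw [hIs_base ε]
    rfl
  have h4 : nsm M X y x
      = ∑ z : ∀ v, M.Dom v, (∏ v : V, qd M d v z) * (Is z * Ix z) := by
    rw [← pushforward_gd M d (fun z => Is z * Ix z)]
    unfold nsm
    exact Finset.sum_congr rfl fun ε _ => by rw [hIs_base ε, hIx_base ε]
  -- membership helpers
  have hS'A : ∀ p ∈ S'F M X, p ∈ AnSet M X := fun p hp =>
    S_sub_An M X (S'_sub_S M X (Finset.mem_filter.1 hp).2)
  have hXA : X ∈ AnSet M X := X_mem_An M X
  have hDSA : ∀ u ∈ DSF M, u ∈ AnSet M X := by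
    intro u hu
    have := Finset.mem_filter.1 hu
    exact DS_sub_An M X ⟨this.1, this.2⟩
  -- marginalize to AnF
  have hDA : M.D ∈ AnF M X :=
    Finset.mem_filter.2 ⟨Finset.mem_univ _, S_sub_An M X (D_mem_S M X)⟩
  have hcl : ∀ p v, M.Edge p v → v ∈ AnF M X → p ∈ AnF M X := by
    intro p v hpv hv
    exact Finset.mem_filter.2 ⟨Finset.mem_univ _,
      An_closed M X hpv (Finset.mem_filter.1 hv).2⟩
  have hdepIs : DepOn M Is (AnSet M X) :=
    depOn_mono M (fun p hp => hS'A p hp) (ind_depOn M (S'F M X) y)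
  have hdepIx : DepOn M Ix (AnSet M X) := by
    refine depOn_mono M ?_ (indX_depOn M X x)
    rintro v rfl
    exact hXA
  have hdepPs : DepOn M (Psiv M) (AnSet M X) :=
    depOn_mono M (fun u hu => hDSA u hu) (psiv_depOn M)
  have hAnsub : AnSet M X ⊆ ((AnF M X : Finset V) : Set V) := fun v hv =>
    Finset.mem_coe.2 (Finset.mem_filter.2 ⟨Finset.mem_univ _, hv⟩)
  have hdepIs' : DepOn M Is ((AnF M X : Finset V) : Set V) := depOn_mono M hAnsub hdepIs
  have hdepIx' : DepOn M Ix ((AnF M X : Finset V) : Set V) := depOn_mono M hAnsub hdepIx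
  have hdepPs' : DepOn M (Psiv M) ((AnF M X : Finset V) : Set V) := depOn_mono M hAnsub hdepPs
  set κ : ℝ := ∏ v ∈ Finset.univ \ AnF M X, (Fintype.card (M.Dom v) : ℝ) with hκ
  have hm1 := marg M (AnF M X) hDA hcl d (fun z => Is z * (Ix z * Psiv M z))
    (depOn_mul M hdepIs' (depOn_mul M hdepIx' hdepPs'))
  have hm2 := marg M (AnF M X) hDA hcl d Is hdepIs'
  have hm3 := marg M (AnF M X) hDA hcl d (fun z => Is z * Psiv M z)
    (depOn_mul M hdepIs' hdepPs')
  have hm4 := marg M (AnF M X) hDA hcl d (fun z => Is z * Ix z)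
    (depOn_mul M hdepIs' hdepIx')
  -- split the AnF product
  have hLfRf : Disjoint (Lf M X) (Rf M X) := by
    rw [Finset.disjoint_left]
    intro a ha hb
    exact LR_disj M X (Finset.mem_filter.1 ha).2 (Finset.mem_filter.1 hb).2
  have hDnot : M.D ∉ Lf M X ∪ Rf M X := by
    rw [Finset.mem_union]
    rintro (h | h)
    · exact L_ne_D M X (Finset.mem_filter.1 h).2 rfl
    · exact (Finset.mem_filter.1 h).2.2.1 rfl
  have hAnsplit : AnF M X = insert M.D (Lf M X ∪ Rf M X) := by
    ext v
    simp only [AnF, Lf, Rf, Finset.mem_insert, Finset.mem_union, Finset.mem_filter,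
      Finset.mem_univ, true_and]
    constructor
    · intro hv
      rcases An_partition M X hv with h | h | h
      · exact Or.inl h
      · exact Or.inr (Or.inl h)
      · exact Or.inr (Or.inr h)
    · rintro (rfl | h | h)
      · exact S_sub_An M X (D_mem_S M X)
      · exact L_sub_An M X h
      · exact R_sub_An M X h
  have hprodsplit : ∀ z : ∀ v, M.Dom v, (∏ v ∈ AnF M X, qd M d v z)
      = qd M d M.D z * ((∏ v ∈ Lf M X, q M v z) * (∏ v ∈ Rf M X, q M v z)) := by
    intro z
    rw [hAnsplit, Finset.prod_insert hDnot, Finset.prod_union hLfRf]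
    congr 1
    congr 1
    · exact Finset.prod_congr rfl fun v hv => by
        unfold qd
        rw [if_neg (L_ne_D M X (Finset.mem_filter.1 hv).2)]
    · exact Finset.prod_congr rfl fun v hv => by
        unfold qd
        rw [if_neg (Finset.mem_filter.1 hv).2.2.1]
  -- the swap
  set G : (∀ v, M.Dom v) → ℝ := fun z => qd M d M.D z * Is z with hG
  set A1 : (∀ v, M.Dom v) → ℝ := fun z => (∏ v ∈ Lf M X, q M v z) * Ix z with hA1
  set A2 : (∀ v, M.Dom v) → ℝ := fun z => ∏ v ∈ Lf M X, q M v z with hA2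
  set B1 : (∀ v, M.Dom v) → ℝ := fun z => (∏ v ∈ Rf M X, q M v z) * Psiv M z with hB1
  set B2 : (∀ v, M.Dom v) → ℝ := fun z => ∏ v ∈ Rf M X, q M v z with hB2
  have hGdep : DepOn M G (Sset M X) := by
    refine depOn_mul M (depOn_mono M ?_ (qdD_depOn M d)) (depOn_mono M ?_ (ind_depOn M (S'F M X) y))
    · rintro v rfl; exact D_mem_S M X
    · intro p hp; exact S'_sub_S M X (Finset.mem_filter.1 hp).2
  have hGpin : ∀ z z', G z ≠ 0 → G z' ≠ 0 → ∀ v ∈ Sset M X, z v = z' v := by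
    intro z z' hz hz' v hv
    have hfacts : ∀ w : ∀ v, M.Dom v, G w ≠ 0 → (w M.D = d ∧ ∀ p ∈ S'F M X, w p = y p) := by
      intro w hw
      constructor
      · by_contra hc
        apply hw
        simp only [hG]
        unfold qd
        rw [if_pos rfl, if_neg hc, zero_mul]
      · by_contra hc
        apply hw
        simp only [hG, hIs]
        unfold Ind
        rw [if_neg hc, mul_zero]
    obtain ⟨hzD, hzS⟩ := hfacts z hz
    obtain ⟨hz'D, hz'S⟩ := hfacts z' hz'
    rcases hv with hv | rfl
    · have hmem : v ∈ S'F M X := Finset.mem_filter.2 ⟨Finset.mem_univ _, hv⟩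
      rw [hzS v hmem, hz'S v hmem]
    · rw [hzD, hz'D]
  have hLq : ∀ v ∈ Lf M X, DepOn M (q M v) ((Lset M X \ Sset M X) ∪ Sset M X) := by
    intro v hv
    refine depOn_mono M ?_ (q_depOn M v)
    rintro p (rfl | hp)
    · exact mem_LSPS M X (Or.inl (Finset.mem_filter.1 hv).2)
    · exact mem_LSPS M X (L_family M X (Finset.mem_filter.1 hv).2 hp)
  have hRq : ∀ v ∈ Rf M X, DepOn M (q M v) ((Lset M X \ Sset M X)ᶜ) := by
    intro v hv
    refine depOn_mono M ?_ (q_depOn M v)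
    rintro p (rfl | hp)
    · exact RS_sub_LSc M X (Or.inl (Finset.mem_filter.1 hv).2)
    · exact RS_sub_LSc M X (R_family M X (Finset.mem_filter.1 hv).2 hp)
  have hA1dep : DepOn M A1 ((Lset M X \ Sset M X) ∪ Sset M X) := by
    refine depOn_mul M (depOn_prod M hLq) (depOn_mono M ?_ (indX_depOn M X x))
    intro v hv
    rw [show v = X from hv]
    exact Or.inl ⟨X_mem_L M X hXpa, X_not_S M X hXpa⟩
  have hA2dep : DepOn M A2 ((Lset M X \ Sset M X) ∪ Sset M X) := depOn_prod M hLq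
  have hB1dep : DepOn M B1 ((Lset M X \ Sset M X)ᶜ) := by
    refine depOn_mul M (depOn_prod M hRq) (depOn_mono M ?_ (psiv_depOn M))
    intro u hu
    have huDS : u ∈ DSset M := by
      have := Finset.mem_filter.1 hu
      exact ⟨this.1, this.2⟩
    exact RS_sub_LSc M X (Or.inl (DS_sub_R M X hXpa hsep huDS))
  have hB2dep : DepOn M B2 ((Lset M X \ Sset M X)ᶜ) := depOn_prod M hRq
  have hswap := swapCI M (Lset M X \ Sset M X) (Sset M X) G A1 A2 B1 B2
    hGdep hGpin hA1dep hA2dep hB1dep hB2dep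
  -- rewrite marginalized sums in swap form
  have e1 : ∑ z : ∀ v, M.Dom v, (∏ v ∈ AnF M X, qd M d v z) * (Is z * (Ix z * Psiv M z))
      = ∑ z : ∀ v, M.Dom v, G z * A1 z * B1 z := by
    refine Finset.sum_congr rfl fun z _ => ?_
    rw [hprodsplit z]
    simp only [hG, hA1, hB1]
    ring
  have e2 : ∑ z : ∀ v, M.Dom v, (∏ v ∈ AnF M X, qd M d v z) * Is z
      = ∑ z : ∀ v, M.Dom v, G z * A2 z * B2 z := by
    refine Finset.sum_congr rfl fun z _ => ?_
    rw [hprodsplit z]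
    simp only [hG, hA2, hB2]
    ring
  have e3 : ∑ z : ∀ v, M.Dom v, (∏ v ∈ AnF M X, qd M d v z) * (Is z * Psiv M z)
      = ∑ z : ∀ v, M.Dom v, G z * A2 z * B1 z := by
    refine Finset.sum_congr rfl fun z _ => ?_
    rw [hprodsplit z]
    simp only [hG, hA2, hB1]
    ring
  have e4 : ∑ z : ∀ v, M.Dom v, (∏ v ∈ AnF M X, qd M d v z) * (Is z * Ix z)
      = ∑ z : ∀ v, M.Dom v, G z * A1 z * B2 z := by
    refine Finset.sum_congr rfl fun z _ => ?_
    rw [hprodsplit z]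
    simp only [hG, hA1, hB2]
    ring
  -- put everything together
  have hκpos : (0:ℝ) < κ := by
    rw [hκ]
    refine Finset.prod_pos fun v _ => ?_
    exact_mod_cast Fintype.card_pos
  have hfinal : (κ * κ) * (Phx M X y x d * Nbar M X y)
      = (κ * κ) * (Vq M X y d * nsm M X y x) := by
    calc (κ * κ) * (Phx M X y x d * Nbar M X y)
        = (κ * Phx M X y x d) * (κ * Nbar M X y) := by ring
      _ = (∑ z : ∀ v, M.Dom v, G z * A1 z * B1 z) *
            (∑ z : ∀ v, M.Dom v, G z * A2 z * B2 z) := by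
          rw [h1, h2, hm1, hm2, e1, e2]
      _ = (∑ z : ∀ v, M.Dom v, G z * A2 z * B1 z) *
            (∑ z : ∀ v, M.Dom v, G z * A1 z * B2 z) := hswap
      _ = (κ * Vq M X y d) * (κ * nsm M X y x) := by
          rw [h3, h4, hm3, hm4, e3, e4]
      _ = (κ * κ) * (Vq M X y d * nsm M X y x) := by ring
  exact mul_left_cancel₀ (by positivity) hfinal

end Diamond


section Assembly

variable (M : SCIM V) (X : V)

def Phf (y : ∀ v, M.Dom v) (d : M.Dom M.D) : ℝ :=
  ∑ ε : ∀ v, M.ExoDom v, M.Pjoint ε * (Ind M (PaF M) y (base M ε) * psif M d ε)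

lemma base_update_exoD (ε : ∀ v, M.ExoDom v) (c : M.ExoDom M.D) :
    base M (Function.update ε M.D c) = base M ε := sol_gd_update_exoD M _ ε c

lemma psif_update_exoD (d : M.Dom M.D) (ε : ∀ v, M.ExoDom v) (c : M.ExoDom M.D) :
    psif M d (Function.update ε M.D c) = psif M d ε := by
  unfold psif
  rw [sol_gd_update_exoD M d ε c]

lemma context_decomp (T : Finset V) (σ : ((p : V) → M.Dom p) → M.ExoDom M.D → M.Dom M.D)
    (hσT : ∀ (a a' : (p : V) → M.Dom p) e, (∀ p ∈ T, a p = a' p) → σ a e = σ a' e) :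
    (∏ v : V, (Fintype.card (M.Dom v) : ℝ)) *
      (∑ ε : ∀ v, M.ExoDom v, M.Pjoint ε * psif M (σ (base M ε) (ε M.D)) ε)
    = (∏ v ∈ T, (Fintype.card (M.Dom v) : ℝ)) *
        ∑ y : ∀ v, M.Dom v, ∑ e : M.ExoDom M.D,
          M.P M.D e * (∑ ε : ∀ v, M.ExoDom v,
            M.Pjoint ε * (Ind M T y (base M ε) * psif M (σ y e) ε)) := by
  classical
  have hcount : ∀ ε : ∀ v, M.ExoDom v, (∏ v : V, (Fintype.card (M.Dom v):ℝ))
      = (∑ y : ∀ v, M.Dom v, Ind M T y (base M ε)) *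
          ∏ v ∈ T, (Fintype.card (M.Dom v):ℝ) := by
    intro ε
    rw [← count_classes M.Dom T (base M ε)]
    rfl
  have step1 : ∀ ε : ∀ v, M.ExoDom v,
      (∏ v : V, (Fintype.card (M.Dom v):ℝ)) *
        (M.Pjoint ε * psif M (σ (base M ε) (ε M.D)) ε)
      = (∏ v ∈ T, (Fintype.card (M.Dom v):ℝ)) *
          ∑ y : ∀ v, M.Dom v,
            M.Pjoint ε * (Ind M T y (base M ε) * psif M (σ y (ε M.D)) ε) := by
    intro ε
    rw [hcount ε, Finset.sum_mul, Finset.sum_mul, Finset.mul_sum]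
    refine Finset.sum_congr rfl fun y _ => ?_
    unfold Ind
    by_cases hc : ∀ p ∈ T, base M ε p = y p
    · rw [if_pos hc, hσT (base M ε) y (ε M.D) hc]
      ring
    · rw [if_neg hc]
      ring
  have step2 : ∀ y : ∀ v, M.Dom v,
      (∑ ε : ∀ v, M.ExoDom v, M.Pjoint ε * (Ind M T y (base M ε) * psif M (σ y (ε M.D)) ε))
      = ∑ e : M.ExoDom M.D, M.P M.D e * (∑ ε : ∀ v, M.ExoDom v,
          M.Pjoint ε * (Ind M T y (base M ε) * psif M (σ y e) ε)) := by
    intro y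
    have expand : ∀ ε : ∀ v, M.ExoDom v,
        M.Pjoint ε * (Ind M T y (base M ε) * psif M (σ y (ε M.D)) ε)
        = ∑ e : M.ExoDom M.D, M.Pjoint ε *
            ((if ε M.D = e then (1:ℝ) else 0) * (Ind M T y (base M ε) * psif M (σ y e) ε)) := by
      intro ε
      rw [Finset.sum_eq_single (ε M.D)]
      · rw [if_pos rfl, one_mul]
      · intro e _ hne
        rw [if_neg (fun hEq => hne hEq.symm), zero_mul, mul_zero]
      · intro habs
        exact absurd (Finset.mem_univ _) habs
    rw [Finset.sum_congr rfl fun ε _ => expand ε, Finset.sum_comm]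
    refine Finset.sum_congr rfl fun e _ => ?_
    refine exo_split M (fun ε => Ind M T y (base M ε) * psif M (σ y e) ε)
      (fun ε c => ?_) e
    show Ind M T y (base M (Function.update ε M.D c)) * psif M (σ y e) (Function.update ε M.D c)
      = Ind M T y (base M ε) * psif M (σ y e) ε
    rw [base_update_exoD M ε c, psif_update_exoD M _ ε c]
  rw [Finset.mul_sum, Finset.sum_congr rfl fun ε _ => step1 ε, ← Finset.mul_sum,
    Finset.sum_comm, Finset.sum_congr rfl fun y _ => step2 y]

lemma X_not_S'F : X ∉ S'F M X := by
  intro h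
  exact (Finset.mem_filter.1 h).2.2 rfl

lemma PaF_insert (hXpa : M.Edge X M.D) : PaF M = insert X (S'F M X) := by
  ext p
  simp only [PaF, S'F, Finset.mem_insert, Finset.mem_filter, Finset.mem_univ, true_and]
  constructor
  · intro hp
    by_cases hpX : p = X
    · exact Or.inl hpX
    · exact Or.inr ⟨hp, hpX⟩
  · rintro (rfl | ⟨hp, _⟩)
    · exact hXpa
    · exact hp

lemma Phf_update (hXpa : M.Edge X M.D) (y : ∀ v, M.Dom v) (x : M.Dom X) (d : M.Dom M.D) :
    Phf M (Function.update y X x) d = Phx M X y x d := by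
  unfold Phf Phx
  refine Finset.sum_congr rfl fun ε _ => ?_
  have hsplit : Ind M (PaF M) (Function.update y X x) (base M ε)
      = Ind M (S'F M X) y (base M ε) * IndX M X x (base M ε) := by
    unfold Ind IndX
    rw [PaF_insert M X hXpa]
    have hiff : (∀ p ∈ insert X (S'F M X), base M ε p = Function.update y X x p)
        ↔ (base M ε X = x ∧ ∀ p ∈ S'F M X, base M ε p = y p) := by
      rw [Finset.forall_mem_insert]
      constructor
      · rintro ⟨h1, h2⟩
        refine ⟨by rwa [Function.update_self] at h1, fun p hp => ?_⟩
        have := h2 p hp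
        rwa [Function.update_of_ne (fun hEq => X_not_S'F M X (by rw [hEq] at hp; exact hp))] at this
      · rintro ⟨h1, h2⟩
        refine ⟨by rwa [Function.update_self], fun p hp => ?_⟩
        rw [Function.update_of_ne (fun hEq => X_not_S'F M X (by rw [hEq] at hp; exact hp))]
        exact h2 p hp
    rw [if_congr hiff rfl rfl]
    by_cases hA : base M ε X = x
    · by_cases hB : ∀ p ∈ S'F M X, base M ε p = y p
      · rw [if_pos ⟨hA, hB⟩, if_pos hB, if_pos hA]; ring
      · rw [if_neg (fun h => hB h.2), if_neg hB]; ring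
    · by_cases hB : ∀ p ∈ S'F M X, base M ε p = y p
      · rw [if_neg (fun h => hA h.1), if_pos hB, if_neg hA]; ring
      · rw [if_neg (fun h => hA h.1), if_neg hB]; ring
  rw [hsplit]
  ring

lemma nsm_nonneg (y : ∀ v, M.Dom v) (x : M.Dom X) : 0 ≤ nsm M X y x := by
  refine Finset.sum_nonneg fun ε _ => ?_
  refine mul_nonneg (pjoint_nonneg M ε) (mul_nonneg ?_ ?_)
  · unfold Ind; split <;> norm_num
  · unfold IndX; split <;> norm_num

lemma Nbar_nonneg (y : ∀ v, M.Dom v) : 0 ≤ Nbar M X y := by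
  refine Finset.sum_nonneg fun ε _ => ?_
  refine mul_nonneg (pjoint_nonneg M ε) ?_
  unfold Ind; split <;> norm_num

lemma sum_nsm (y : ∀ v, M.Dom v) : ∑ x : M.Dom X, nsm M X y x = Nbar M X y := by
  unfold nsm Nbar
  rw [Finset.sum_comm]
  refine Finset.sum_congr rfl fun ε _ => ?_
  rw [← Finset.mul_sum]
  congr 1
  have : ∀ x : M.Dom X, Ind M (S'F M X) y (base M ε) * IndX M X x (base M ε)
      = Ind M (S'F M X) y (base M ε) * (if base M ε X = x then 1 else 0) := fun x => rfl
  rw [Finset.sum_congr rfl fun x _ => this x, ← Finset.mul_sum,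
    Finset.sum_ite_eq Finset.univ (base M ε X) (fun _ => (1:ℝ))]
  simp

lemma Nbar_zero_collapse (y : ∀ v, M.Dom v) (hN : Nbar M X y = 0) :
    (∀ x d, Phx M X y x d = 0) ∧ (∀ d, Vq M X y d = 0) := by
  have hterm : ∀ ε : ∀ v, M.ExoDom v,
      M.Pjoint ε * Ind M (S'F M X) y (base M ε) = 0 := by
    have := (Finset.sum_eq_zero_iff_of_nonneg (fun ε _ => ?_)).1 hN
    · intro ε; exact this ε (Finset.mem_univ ε)
    · refine mul_nonneg (pjoint_nonneg M ε) ?_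
      unfold Ind; split <;> norm_num
  constructor
  · intro x d
    refine Finset.sum_eq_zero fun ε _ => ?_
    have h0 := hterm ε
    rcases mul_eq_zero.1 h0 with h | h
    · rw [h, zero_mul]
    · rw [h]; ring
  · intro d
    refine Finset.sum_eq_zero fun ε _ => ?_
    have h0 := hterm ε
    rcases mul_eq_zero.1 h0 with h | h
    · rw [h, zero_mul]
    · rw [h]; ring

end Assembly

end NRAux

open NRAux


/-- nonrequisite observation soundness: if the observation
`X ∈ Pa_D` is d-separated from the downstream utilities `𝒰 ∩ Desc(D)` given
`(Pa_D ∪ {D}) \ {X}`, then every policy is weakly dominated by a policy not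
using the link `X → D`; i.e. removing the link does not decrease the maximum
attainable expected utility. -/
theorem nonrequisite_soundness {V : Type} [Fintype V] [DecidableEq V]
    (M : SCIM V) (X : V) (hXpa : M.Edge X M.D)
    (hsep : DSep M.Edge {X}
      {u | u ∈ M.Util ∧ Relation.ReflTransGen M.Edge M.D u}
      {v | (M.Edge v M.D ∧ v ≠ X) ∨ v = M.D}) :
    ∀ π, M.IsPolicy π → ∃ π', M.IsPolicyWithout X π' ∧ M.EU π ≤ M.EU π' := by
  classical
  intro π hπ
  have hsep' : DSep M.Edge {X} (DSset M) (Sset M X) := hsep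
  -- the argmax operator
  have exmax : ∀ F : M.Dom X → ℝ, ∃ x, ∀ x', F x' ≤ F x := by
    intro F
    obtain ⟨x, -, hx⟩ := Finset.exists_max_image (Finset.univ : Finset (M.Dom X)) F
      ⟨(M.domNE X).some, Finset.mem_univ _⟩
    exact ⟨x, fun x' => hx x' (Finset.mem_univ x')⟩
  set argm : (M.Dom X → ℝ) → M.Dom X := fun F => (exmax F).choose with harg
  have argm_spec : ∀ (F : M.Dom X → ℝ) (x0 : M.Dom X), F x0 ≤ F (argm F) :=
    fun F => (exmax F).choose_spec
  -- the improved policy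
  set π' : ((p : V) → M.Dom p) → M.ExoDom M.D → M.Dom M.D := fun a e =>
    π (Function.update a X (argm (fun x => Vq M X a (π (Function.update a X x) e)))) e
    with hπ'def
  -- π' ignores the link X → D
  have hπ'w : ∀ a a' e, (∀ p, M.Edge p M.D → p ≠ X → a p = a' p) → π' a e = π' a' e := by
    intro a a' e hpa
    have hupd : ∀ x : M.Dom X, ∀ p, M.Edge p M.D →
        Function.update a X x p = Function.update a' X x p := by
      intro x p hp
      by_cases hpX : p = X
      · subst hpX; rw [Function.update_self, Function.update_self]
      · rw [Function.update_of_ne hpX, Function.update_of_ne hpX]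
        exact hpa p hp hpX
    have hVq : ∀ d, Vq M X a d = Vq M X a' d := by
      intro d
      refine Finset.sum_congr rfl fun ε _ => ?_
      have hiff : (∀ p ∈ S'F M X, base M ε p = a p) ↔ (∀ p ∈ S'F M X, base M ε p = a' p) := by
        constructor <;> intro h p hp
        · have hm := (Finset.mem_filter.1 hp).2
          rw [← hpa p hm.1 hm.2]; exact h p hp
        · have hm := (Finset.mem_filter.1 hp).2
          rw [hpa p hm.1 hm.2]; exact h p hp
      show M.Pjoint ε * (Ind M (S'F M X) a (base M ε) * psif M d ε)
        = M.Pjoint ε * (Ind M (S'F M X) a' (base M ε) * psif M d ε)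
      unfold Ind
      rw [if_congr hiff rfl rfl]
    have hF : (fun x => Vq M X a (π (Function.update a X x) e)) =
        (fun x => Vq M X a' (π (Function.update a' X x) e)) := by
      funext x
      rw [hVq, hπ _ _ e (hupd x)]
    show π (Function.update a X (argm (fun x => Vq M X a (π (Function.update a X x) e)))) e
      = π (Function.update a' X (argm (fun x => Vq M X a' (π (Function.update a' X x) e)))) e
    rw [hF]
    exact hπ _ _ e (hupd _)
  have hπ'pol : M.IsPolicy π' := fun a a' e h => hπ'w a a' e (fun p hp _ => h p hp)
  refine ⟨π', ⟨hπ'pol, hπ'w⟩, ?_⟩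
  -- key per-context inequality
  have key : ∀ (y : ∀ v, M.Dom v) (e : M.ExoDom M.D),
      (∑ x : M.Dom X, Phf M (Function.update y X x) (π (Function.update y X x) e))
        ≤ Vq M X y (π' y e) := by
    intro y e
    have hφ : ∀ x : M.Dom X, Phf M (Function.update y X x) (π (Function.update y X x) e)
        = Phx M X y x (π (Function.update y X x) e) := fun x => Phf_update M X hXpa y x _
    rw [Finset.sum_congr rfl fun x _ => hφ x]
    by_cases hN : Nbar M X y = 0
    · obtain ⟨hP, hV⟩ := Nbar_zero_collapse M X y hN
      rw [Finset.sum_congr rfl fun x _ => hP x _, hV _]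
      simp
    · have hNpos : 0 < Nbar M X y := lt_of_le_of_ne (Nbar_nonneg M X y) (Ne.symm hN)
      have hVmax : ∀ x : M.Dom X,
          Vq M X y (π (Function.update y X x) e) ≤ Vq M X y (π' y e) :=
        fun x => argm_spec (fun x => Vq M X y (π (Function.update y X x) e)) x
      refine le_of_mul_le_mul_right ?_ hNpos
      calc (∑ x : M.Dom X, Phx M X y x (π (Function.update y X x) e)) * Nbar M X y
          = ∑ x : M.Dom X, Phx M X y x (π (Function.update y X x) e) * Nbar M X y := by
            rw [Finset.sum_mul]
        _ = ∑ x : M.Dom X, Vq M X y (π (Function.update y X x) e) * nsm M X y x :=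
            Finset.sum_congr rfl fun x _ =>
              diamond M X hXpa hsep' (π (Function.update y X x) e) y x
        _ ≤ ∑ x : M.Dom X, Vq M X y (π' y e) * nsm M X y x :=
            Finset.sum_le_sum fun x _ =>
              mul_le_mul_of_nonneg_right (hVmax x) (nsm_nonneg M X y x)
        _ = Vq M X y (π' y e) * ∑ x : M.Dom X, nsm M X y x := by rw [Finset.mul_sum]
        _ = Vq M X y (π' y e) * Nbar M X y := by rw [sum_nsm]
  -- per-e inequality after averaging over x
  have step : ∀ e : M.ExoDom M.D,
      (Fintype.card (M.Dom X) : ℝ) * (∑ y : ∀ v, M.Dom v, Phf M y (π y e))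
        ≤ ∑ y : ∀ v, M.Dom v, Vq M X y (π' y e) := by
    intro e
    rw [← sum_update_eq_card_mul M.Dom X (fun y => Phf M y (π y e))]
    exact Finset.sum_le_sum (fun y _ => key y e)
  -- global decompositions
  have hd1 := context_decomp M (PaF M) π
    (fun a a' e h => hπ a a' e (fun p hp =>
      h p (Finset.mem_filter.2 ⟨Finset.mem_univ _, hp⟩)))
  have hd2 := context_decomp M (S'F M X) π'
    (fun a a' e h => hπ'w a a' e (fun p hpD hpX =>
      h p (Finset.mem_filter.2 ⟨Finset.mem_univ _, hpD, hpX⟩)))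
  have hAP : (∏ v ∈ PaF M, (Fintype.card (M.Dom v) : ℝ))
      = (Fintype.card (M.Dom X) : ℝ) * ∏ v ∈ S'F M X, (Fintype.card (M.Dom v) : ℝ) := by
    rw [PaF_insert M X hXpa, Finset.prod_insert (X_not_S'F M X)]
  have hASnn : (0:ℝ) ≤ ∏ v ∈ S'F M X, (Fintype.card (M.Dom v) : ℝ) :=
    Finset.prod_nonneg fun v _ => by positivity
  have hUpos : (0:ℝ) < ∏ v : V, (Fintype.card (M.Dom v) : ℝ) :=
    Finset.prod_pos fun v _ => by exact_mod_cast Fintype.card_pos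
  -- assemble the Ψ-part inequality
  have hΨ : (∑ ε : ∀ v, M.ExoDom v, M.Pjoint ε * psif M (π (base M ε) (ε M.D)) ε)
      ≤ ∑ ε : ∀ v, M.ExoDom v, M.Pjoint ε * psif M (π' (base M ε) (ε M.D)) ε := by
    rw [← mul_le_mul_iff_right₀ hUpos]
    rw [hd1, hd2]
    have hswap1 : (∑ y : ∀ v, M.Dom v, ∑ e : M.ExoDom M.D,
        M.P M.D e * (∑ ε : ∀ v, M.ExoDom v,
          M.Pjoint ε * (Ind M (PaF M) y (base M ε) * psif M (π y e) ε)))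
        = ∑ e : M.ExoDom M.D, M.P M.D e * ∑ y : ∀ v, M.Dom v, Phf M y (π y e) := by
      rw [Finset.sum_comm]
      refine Finset.sum_congr rfl fun e _ => ?_
      rw [Finset.mul_sum]
      rfl
    have hswap2 : (∑ y : ∀ v, M.Dom v, ∑ e : M.ExoDom M.D,
        M.P M.D e * (∑ ε : ∀ v, M.ExoDom v,
          M.Pjoint ε * (Ind M (S'F M X) y (base M ε) * psif M (π' y e) ε)))
        = ∑ e : M.ExoDom M.D, M.P M.D e * ∑ y : ∀ v, M.Dom v, Vq M X y (π' y e) := by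
      rw [Finset.sum_comm]
      refine Finset.sum_congr rfl fun e _ => ?_
      rw [Finset.mul_sum]
      rfl
    rw [hswap1, hswap2, hAP]
    have hstep2 : ∀ e : M.ExoDom M.D,
        (Fintype.card (M.Dom X):ℝ) * (M.P M.D e * ∑ y : ∀ v, M.Dom v, Phf M y (π y e))
        ≤ M.P M.D e * ∑ y : ∀ v, M.Dom v, Vq M X y (π' y e) := by
      intro e
      have h0 := mul_le_mul_of_nonneg_left (step e) (M.Pnonneg M.D e)
      calc (Fintype.card (M.Dom X):ℝ) * (M.P M.D e * ∑ y : ∀ v, M.Dom v, Phf M y (π y e))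
          = M.P M.D e * ((Fintype.card (M.Dom X):ℝ) * ∑ y : ∀ v, M.Dom v, Phf M y (π y e)) := by
            ring
        _ ≤ M.P M.D e * ∑ y : ∀ v, M.Dom v, Vq M X y (π' y e) := h0
    have hsumle : ∑ e : M.ExoDom M.D,
        (Fintype.card (M.Dom X):ℝ) * (M.P M.D e * ∑ y : ∀ v, M.Dom v, Phf M y (π y e))
        ≤ ∑ e : M.ExoDom M.D, M.P M.D e * ∑ y : ∀ v, M.Dom v, Vq M X y (π' y e) :=
      Finset.sum_le_sum fun e _ => hstep2 e
    have hL : (Fintype.card (M.Dom X):ℝ) * (∏ v ∈ S'F M X, (Fintype.card (M.Dom v):ℝ)) *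
        (∑ e : M.ExoDom M.D, M.P M.D e * ∑ y : ∀ v, M.Dom v, Phf M y (π y e))
        = (∏ v ∈ S'F M X, (Fintype.card (M.Dom v):ℝ)) *
          ∑ e : M.ExoDom M.D,
            (Fintype.card (M.Dom X):ℝ) * (M.P M.D e * ∑ y : ∀ v, M.Dom v, Phf M y (π y e)) := by
      rw [Finset.mul_sum, Finset.mul_sum]
      exact Finset.sum_congr rfl fun e _ => by ring
    rw [hL]
    exact mul_le_mul_of_nonneg_left hsumle hASnn
  rw [EU_decomp M π hπ, EU_decomp M π' hπ'pol]
  linarith
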